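/- arXiv:1204.2435 — 5 statements merged into one kernel-verified Lean document; each statement's English description precedes it below -/
import Mathlib

section
/- For every α ∈ [0, M) there exists exactly one z ∈ [0,∞) with f(z) = α; that is, the inverse function f⁻¹ : [0, M) → [0,∞) is well-defined. -/
open Finset Filter Real Topology

private lemma Hnn' (x y : ℝ) (hx : 0 ≤ x) (hxy : x < y) (bu bv : ℝ) (hbu : 0 ≤ bu) (hbv : 0 ≤ bv)
    (u v : ℕ) :
    0 ≤ bu * bv * ((u:ℝ) - v) * (y^u * x^v - x^u * y^v) := by
  have hy : 0 ≤ y := hx.trans hxy.le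
  rcases lt_trichotomy u v with h | rfl | h
  · have hk : x^(v-u) ≤ y^(v-u) := pow_le_pow_left₀ hx hxy.le _
    have h1 : y^u * x^v - x^u * y^v ≤ 0 := by
      have hv : v = u + (v - u) := by omega
      rw [hv, pow_add, pow_add]
      nlinarith [mul_le_mul_of_nonneg_left hk (mul_nonneg (pow_nonneg hx u) (pow_nonneg hy u))]
    have h2 : ((u:ℝ) - v) ≤ 0 := by
      have := (Nat.cast_lt (α := ℝ)).2 h; linarith
    nlinarith [mul_nonneg hbu hbv,
      mul_nonneg (neg_nonneg.mpr h2) (neg_nonneg.mpr h1)]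
  · simp
  · have hk : x^(u-v) ≤ y^(u-v) := pow_le_pow_left₀ hx hxy.le _
    have h1 : 0 ≤ y^u * x^v - x^u * y^v := by
      have hu : u = v + (u - v) := by omega
      rw [hu, pow_add, pow_add]
      nlinarith [mul_le_mul_of_nonneg_left hk (mul_nonneg (pow_nonneg hx v) (pow_nonneg hy v))]
    have h2 : 0 ≤ ((u:ℝ) - v) := by
      have := (Nat.cast_lt (α := ℝ)).2 h; linarith
    positivity

private lemma key_lt' (n r0 : ℕ) (b : ℕ → ℝ) (hb : ∀ u, 0 ≤ b u) (hb0 : b 0 = 1)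
    (hbr : 0 < b r0) (hr : 1 ≤ r0) (hrn : r0 ≤ n) (x y : ℝ) (hx : 0 ≤ x) (hxy : x < y) :
    (∑ u ∈ range (n+1), (u:ℝ) * b u * x^u) * (∑ u ∈ range (n+1), b u * y^u)
      < (∑ u ∈ range (n+1), (u:ℝ) * b u * y^u) * (∑ u ∈ range (n+1), b u * x^u) := by
  set R := range (n+1) with hR
  set G : ℕ → ℕ → ℝ := fun u v => b u * b v * (u:ℝ) * (y^u * x^v - x^u * y^v) with hG
  have hexpand :
      (∑ u ∈ R, (u:ℝ) * b u * y^u) * (∑ u ∈ R, b u * x^u)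
        - (∑ u ∈ R, (u:ℝ) * b u * x^u) * (∑ u ∈ R, b u * y^u)
      = ∑ u ∈ R, ∑ v ∈ R, G u v := by
    rw [Finset.sum_mul_sum, Finset.sum_mul_sum, ← Finset.sum_sub_distrib]
    refine Finset.sum_congr rfl fun u _ => ?_
    rw [← Finset.sum_sub_distrib]
    exact Finset.sum_congr rfl fun v _ => by simp only [hG]; ring
  have hswap : ∑ u ∈ R, ∑ v ∈ R, G u v = ∑ u ∈ R, ∑ v ∈ R, G v u := Finset.sum_comm
  have h2 : 2 * (∑ u ∈ R, ∑ v ∈ R, G u v)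
      = ∑ u ∈ R, ∑ v ∈ R, b u * b v * ((u:ℝ) - v) * (y^u * x^v - x^u * y^v) := by
    rw [two_mul]; nth_rewrite 2 [hswap]
    rw [← Finset.sum_add_distrib]
    refine Finset.sum_congr rfl fun u _ => ?_
    rw [← Finset.sum_add_distrib]
    exact Finset.sum_congr rfl fun v _ => by simp only [hG]; ring
  have hpos : 0 < ∑ u ∈ R, ∑ v ∈ R, b u * b v * ((u:ℝ) - v) * (y^u * x^v - x^u * y^v) := by
    apply Finset.sum_pos'
    · intro u _
      exact Finset.sum_nonneg fun v _ => Hnn' x y hx hxy _ _ (hb u) (hb v) u v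
    · refine ⟨r0, by simp [hR]; omega, ?_⟩
      apply Finset.sum_pos'
      · intro v _; exact Hnn' x y hx hxy _ _ (hb r0) (hb v) r0 v
      · refine ⟨0, by simp [hR], ?_⟩
        have hyx : x^r0 < y^r0 := pow_lt_pow_left₀ hxy hx (by omega)
        have : (0:ℝ) < (r0:ℝ) := by exact_mod_cast Nat.pos_of_ne_zero (by omega)
        simp only [pow_zero, hb0, Nat.cast_zero, sub_zero, mul_one]
        exact mul_pos (mul_pos hbr this) (sub_pos.mpr hyx)
  linarith

private lemma lower_bd' (n ub : ℕ) (b : ℕ → ℝ) (hb : ∀ u, 0 ≤ b u)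
    (hubpos : 0 < b ub) (hhi : ∀ u, ub < u → b u = 0) (hubn : ub ≤ n) (hub1 : 1 ≤ ub)
    (z : ℝ) (hz : 1 ≤ z) :
    (ub:ℝ) - ((ub:ℝ) * (∑ u ∈ range (n+1), b u) / b ub) / z
      ≤ (∑ u ∈ range (n+1), (u:ℝ) * b u * z^u) / (∑ u ∈ range (n+1), b u * z^u) := by
  have hz0 : 0 < z := lt_of_lt_of_le one_pos hz
  set S := ∑ u ∈ range (n+1), b u with hS
  have hS0 : 0 ≤ S := Finset.sum_nonneg fun u _ => hb u
  set A := ∑ u ∈ range (n+1), b u * z^u with hA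
  set N := ∑ u ∈ range (n+1), (u:ℝ) * b u * z^u with hN
  have hAlb : b ub * z^ub ≤ A :=
    Finset.single_le_sum (f := fun u => b u * z^u)
      (fun u _ => mul_nonneg (hb u) (pow_nonneg hz0.le u)) (by simp; omega)
  have hApos : 0 < A := lt_of_lt_of_le (by positivity) hAlb
  have h1 : (ub:ℝ) * A - N ≤ (ub:ℝ) * S * z^(ub-1) := by
    rw [hA, hN, Finset.mul_sum, ← Finset.sum_sub_distrib]
    have : (ub:ℝ) * S * z^(ub-1) = ∑ u ∈ range (n+1), (ub:ℝ) * b u * z^(ub-1) := by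
      rw [hS, Finset.mul_sum, Finset.sum_mul]
    rw [this]
    refine Finset.sum_le_sum fun u _ => ?_
    have hterm : (ub:ℝ) * (b u * z^u) - (u:ℝ) * b u * z^u = ((ub:ℝ) - u) * b u * z^u := by ring
    rw [hterm]
    rcases le_or_gt u ub with hcase | hcase
    · rcases eq_or_lt_of_le hcase with rfl | hlt
      · simp
        positivity
      · have hzu : z^u ≤ z^(ub-1) := pow_le_pow_right₀ hz (by omega)
        have hc1 : ((ub:ℝ) - u) ≤ (ub:ℝ) := by
          have : (0:ℝ) ≤ (u:ℝ) := Nat.cast_nonneg u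
          linarith
        have hc0 : (0:ℝ) ≤ (ub:ℝ) - u := by
          have := (Nat.cast_le (α := ℝ)).2 hcase; linarith
        have step1 : ((ub:ℝ)-u) * b u * z^u ≤ (ub:ℝ) * b u * z^u :=
          mul_le_mul_of_nonneg_right (mul_le_mul_of_nonneg_right hc1 (hb u))
            (pow_nonneg hz0.le u)
        have step2 : (ub:ℝ) * b u * z^u ≤ (ub:ℝ) * b u * z^(ub-1) :=
          mul_le_mul_of_nonneg_left hzu (mul_nonneg (Nat.cast_nonneg ub) (hb u))
        linarith
    · rw [hhi u hcase]
      simp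
  have hCz : 0 ≤ (ub:ℝ) * S / b ub / z := by positivity
  have h2 : (ub:ℝ) * S * z^(ub-1) ≤ ((ub:ℝ) * S / b ub / z) * A := by
    have heq : ((ub:ℝ) * S / b ub / z) * (b ub * z^ub) = (ub:ℝ) * S * z^(ub-1) := by
      have hzpow : z^ub = z^(ub-1) * z := by
        rw [← pow_succ]; congr 1; omega
      rw [hzpow]
      field_simp
    calc (ub:ℝ) * S * z^(ub-1) = ((ub:ℝ) * S / b ub / z) * (b ub * z^ub) := heq.symm
      _ ≤ ((ub:ℝ) * S / b ub / z) * A := mul_le_mul_of_nonneg_left hAlb hCz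
  rw [le_div_iff₀ hApos, sub_mul]
  linarith

/-- The local weight enumerating polynomial `A_t(z) = 1 + ∑_{u=r_t}^{s_t} a_{t,u} z^u`,
encoded with a full coefficient function `a` satisfying `a t 0 = 1`, `a t u = 0` for
`0 < u < r t` and for `u > s t`. -/
noncomputable def Afun {ι : Type*} (s : ι → ℕ) (a : ι → ℕ → ℝ) (t : ι) (z : ℝ) : ℝ :=
  ∑ u ∈ Finset.range (s t + 1), a t u * z ^ u

/-- The function `f(z) = c ⬝ ∑_{t ∈ I_c} γ_t z A_t′(z) / A_t(z)`. -/
noncomputable def ff {ι : Type*} [Fintype ι] (s : ι → ℕ) (a : ι → ℕ → ℝ)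
    (γ : ι → ℝ) (c : ℝ) (z : ℝ) : ℝ :=
  c * ∑ t, γ t * (z * deriv (Afun s a t) z) / Afun s a t z

private lemma zderiv_Afun' {ι : Type*} (s : ι → ℕ) (a : ι → ℕ → ℝ) (t : ι) (z : ℝ) :
    z * deriv (Afun s a t) z = ∑ u ∈ Finset.range (s t + 1), (u:ℝ) * a t u * z ^ u := by
  have hd : HasDerivAt (Afun s a t)
      (∑ u ∈ Finset.range (s t + 1), a t u * ((u:ℝ) * z ^ (u - 1))) z := by
    unfold Afun
    exact HasDerivAt.fun_sum fun u _ => (hasDerivAt_pow u z).const_mul (a t u)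
  rw [hd.deriv, Finset.mul_sum]
  refine Finset.sum_congr rfl fun u _ => ?_
  rcases u with _ | u
  · simp
  · simp only [Nat.add_sub_cancel]
    push_cast
    ring

private lemma ff_eq' {ι : Type*} [Fintype ι] (s : ι → ℕ) (a : ι → ℕ → ℝ)
    (γ : ι → ℝ) (c : ℝ) (z : ℝ) :
    ff s a γ c z = c * ∑ t, γ t *
      ((∑ u ∈ Finset.range (s t + 1), (u:ℝ) * a t u * z ^ u)
        / (∑ u ∈ Finset.range (s t + 1), a t u * z ^ u)) := by
  unfold ff
  congr 1
  refine Finset.sum_congr rfl fun t _ => ?_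
  rw [zderiv_Afun', mul_div_assoc]
  rfl

/-- for every `α ∈ [0, M)` there is exactly one `z ∈ [0,∞)` with `f(z) = α`;
that is, `f⁻¹ : [0,M) → [0,∞)` is well-defined.  Here `M = c ⬝ ∑_t γ_t ū_t`. -/
theorem stmt_4 {ι : Type*} [Fintype ι] [Nonempty ι]
    (r s : ι → ℕ) (h2r : ∀ t, 2 ≤ r t) (hrs : ∀ t, r t ≤ s t)
    (a : ι → ℕ → ℝ)
    (ha0 : ∀ t, a t 0 = 1)
    (hmid : ∀ t u, 0 < u → u < r t → a t u = 0)
    (hhigh : ∀ t u, s t < u → a t u = 0)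
    (hnn : ∀ t u, 0 ≤ a t u)
    (har : ∀ t, 0 < a t (r t))
    (ubar : ι → ℕ)
    (hubar : ∀ t, 0 < a t (ubar t) ∧ ∀ u, a t u ≠ 0 → u ≤ ubar t)
    (γ : ι → ℝ) (hγ : ∀ t, 0 < γ t) (c : ℝ) (hc : 0 < c) :
    ∀ α : ℝ, 0 ≤ α → α < c * ∑ t, γ t * (ubar t : ℝ) →
      ∃! z : ℝ, 0 ≤ z ∧ ff s a γ c z = α := by
  intro α hα0 hαM
  -- notation
  set Nf : ι → ℝ → ℝ := fun t z => ∑ u ∈ Finset.range (s t + 1), (u:ℝ) * a t u * z ^ u with hNf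
  set Af : ι → ℝ → ℝ := fun t z => ∑ u ∈ Finset.range (s t + 1), a t u * z ^ u with hAf
  set F : ℝ → ℝ := fun z => c * ∑ t, γ t * (Nf t z / Af t z) with hF
  have hffF : ∀ z, ff s a γ c z = F z := fun z => ff_eq' s a γ c z
  -- positivity of Af on [0, ∞)
  have hApos : ∀ t z, 0 ≤ z → 0 < Af t z := by
    intro t z hz
    have h1 : a t 0 * z ^ 0 ≤ Af t z :=
      Finset.single_le_sum (f := fun u => a t u * z ^ u)
        (fun u _ => mul_nonneg (hnn t u) (pow_nonneg hz u)) (by simp)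
    rw [ha0 t] at h1
    simp at h1
    linarith
  -- strict monotonicity of F on [0, ∞)
  have hmono : ∀ x y : ℝ, 0 ≤ x → x < y → F x < F y := by
    intro x y hx hxy
    have hy : (0:ℝ) ≤ y := hx.trans hxy.le
    apply mul_lt_mul_of_pos_left _ hc
    apply Finset.sum_lt_sum_of_nonempty Finset.univ_nonempty
    intro t _
    apply mul_lt_mul_of_pos_left _ (hγ t)
    rw [div_lt_div_iff₀ (hApos t x hx) (hApos t y hy)]
    exact key_lt' (s t) (r t) (a t) (hnn t) (ha0 t) (har t) (by have := h2r t; omega) (hrs t) x y hx hxy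
  -- continuity of F on [0, ∞)
  have hcont : ContinuousOn F (Set.Ici (0:ℝ)) := by
    apply ContinuousOn.mul continuousOn_const
    apply continuousOn_finset_sum
    intro t _
    apply ContinuousOn.mul continuousOn_const
    apply ContinuousOn.div
    · exact (continuous_finset_sum _ fun u _ =>
        continuous_const.mul (continuous_pow u)).continuousOn
    · exact (continuous_finset_sum _ fun u _ =>
        continuous_const.mul (continuous_pow u)).continuousOn
    · intro z hz; exact ne_of_gt (hApos t z hz)
  -- F 0 = 0
  have hF0 : F 0 = 0 := by
    have : ∀ t, Nf t 0 = 0 := by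
      intro t
      apply Finset.sum_eq_zero
      intro u _
      rcases u with _ | u
      · simp
      · simp [zero_pow]
    simp only [hF]
    rw [Finset.sum_eq_zero fun t _ => by rw [this t, zero_div, mul_zero]]
    simp
  -- ubar facts
  have hub2 : ∀ t, 2 ≤ ubar t := fun t =>
    le_trans (h2r t) ((hubar t).2 (r t) (ne_of_gt (har t)))
  have hubs : ∀ t, ubar t ≤ s t := by
    intro t
    by_contra h
    exact absurd (hhigh t (ubar t) (by omega)) (ne_of_gt (hubar t).1)
  -- constants
  set M := c * ∑ t, γ t * (ubar t : ℝ) with hM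
  set C : ι → ℝ := fun t =>
    (ubar t : ℝ) * (∑ u ∈ Finset.range (s t + 1), a t u) / a t (ubar t) with hC
  have hCnn : ∀ t, 0 ≤ C t := by
    intro t
    have := (hubar t).1
    have hSnn : 0 ≤ ∑ u ∈ Finset.range (s t + 1), a t u :=
      Finset.sum_nonneg fun u _ => hnn t u
    positivity
  set K := c * ∑ t, γ t * C t with hK
  have hKnn : 0 ≤ K := by
    apply mul_nonneg hc.le
    exact Finset.sum_nonneg fun t _ => mul_nonneg (hγ t).le (hCnn t)
  have hMα : 0 < M - α := by linarith
  set Z : ℝ := max 1 (K / (M - α) + 1) with hZ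
  have hZ1 : (1:ℝ) ≤ Z := le_max_left _ _
  have hZ0 : (0:ℝ) ≤ Z := by linarith
  have hKZ : K / Z < M - α := by
    rw [div_lt_iff₀ (by linarith : (0:ℝ) < Z)]
    have h1 : K / (M - α) + 1 ≤ Z := le_max_right _ _
    have h2 : (M - α) * (K / (M - α) + 1) = K + (M - α) := by
      field_simp
    nlinarith
  -- lower bound on F Z
  have hFZ : M - K / Z ≤ F Z := by
    have hterm : ∀ t, (ubar t : ℝ) - C t / Z ≤ Nf t Z / Af t Z := by
      intro t
      exact lower_bd' (s t) (ubar t) (a t) (hnn t) (hubar t).1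
        (fun u hu => by
          rcases le_or_gt u (s t) with h | h
          · by_contra hne
            exact absurd ((hubar t).2 u hne) (by omega)
          · exact hhigh t u h)
        (hubs t) (by have := hub2 t; omega) Z hZ1
    have hsum : ∑ t, γ t * ((ubar t : ℝ) - C t / Z) ≤ ∑ t, γ t * (Nf t Z / Af t Z) :=
      Finset.sum_le_sum fun t _ =>
        mul_le_mul_of_nonneg_left (hterm t) (hγ t).le
    have hMKZ : M - K / Z = c * ∑ t, γ t * ((ubar t : ℝ) - C t / Z) := by
      rw [hM, hK, mul_div_assoc, ← mul_sub]
      congr 1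
      rw [Finset.sum_div, ← Finset.sum_sub_distrib]
      exact Finset.sum_congr rfl fun t _ => by ring
    rw [hMKZ, hF]
    exact mul_le_mul_of_nonneg_left hsum hc.le
  have hαFZ : α < F Z := by
    have : α < M - K / Z := by linarith
    linarith
  -- existence via IVT
  have hIVT := intermediate_value_Icc hZ0 (hcont.mono (Set.Icc_subset_Ici_self))
  have hmem : α ∈ Set.Icc (F 0) (F Z) := by
    rw [hF0]
    exact ⟨hα0, hαFZ.le⟩
  obtain ⟨z, hzIcc, hzF⟩ := hIVT hmem
  refine ⟨z, ⟨hzIcc.1, by rw [hffF]; exact hzF⟩, ?_⟩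
  intro y hy
  obtain ⟨hy0, hyF⟩ := hy
  rw [hffF] at hyF
  by_contra hne
  rcases lt_or_gt_of_ne hne with h | h
  · have := hmono y z hy0 h
    rw [hyF, hzF] at this
    exact lt_irrefl _ this
  · have := hmono z y hzIcc.1 h
    rw [hyF, hzF] at this
    exact lt_irrefl _ this
end

section
/- Let s ≥ 1 and let C ⊆ F₂^s be a binary linear code with dual minimum distance greater than one. Then the weight distribution of C is symmetric if and only if the all-ones vector (1,1,…,1) belongs to C. (Equivalently, the weight distribution is symmetric if and only if ū = s.) -/
open Finset

private lemma norm_add_one_aux {s : ℕ} (c : Fin s → ZMod 2) :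
    hammingNorm (c + fun _ => (1 : ZMod 2)) = s - hammingNorm c := by
  classical
  have h1 : ∀ a : ZMod 2, (a + 1 ≠ 0) ↔ ¬ (a ≠ 0) := by decide
  unfold hammingNorm
  simp only [Pi.add_apply]
  rw [Finset.filter_congr (fun i _ => by
    simpa using (h1 (c i)) : ∀ i ∈ univ, ((c i + 1 ≠ 0) ↔ ¬ (c i ≠ 0)))]
  rw [Finset.filter_not, Finset.card_sdiff_of_subset (Finset.filter_subset _ _), Finset.card_univ,
    Fintype.card_fin]

set_option maxHeartbeats 1000000 in
theorem stmt_5 (s : ℕ) (hs : 1 ≤ s)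
    (C : Submodule (ZMod 2) (Fin s → ZMod 2))
    (hdual : ∀ i : Fin s, ∃ c ∈ C, c i ≠ 0)
    (ubar : ℕ)
    (hubar_mem : ∃ c ∈ C, hammingNorm c = ubar)
    (hubar_max : ∀ c ∈ C, hammingNorm c ≤ ubar) :
    ((∀ u ≤ ubar,
        {c : Fin s → ZMod 2 | c ∈ C ∧ hammingNorm c = ubar - u}.ncard
          = {c : Fin s → ZMod 2 | c ∈ C ∧ hammingNorm c = u}.ncard)
      ↔ (fun _ => (1 : ZMod 2)) ∈ C) ∧
    ((∀ u ≤ ubar,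
        {c : Fin s → ZMod 2 | c ∈ C ∧ hammingNorm c = ubar - u}.ncard
          = {c : Fin s → ZMod 2 | c ∈ C ∧ hammingNorm c = u}.ncard)
      ↔ ubar = s) := by
  classical
  have hnorm_le : ∀ c : Fin s → ZMod 2, hammingNorm c ≤ s := fun c => by
    simpa using (hammingNorm_le_card_fintype (x := c))
  have hubar_le : ubar ≤ s := by
    obtain ⟨c, hc, hcn⟩ := hubar_mem
    exact hcn ▸ hnorm_le c
  have hone_norm : hammingNorm (fun _ : Fin s => (1 : ZMod 2)) = s := by
    unfold hammingNorm
    simp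
  -- H3 : ubar = s → all-ones ∈ C
  have H3 : ubar = s → (fun _ => (1 : ZMod 2)) ∈ C := by
    intro h
    obtain ⟨c, hc, hcn⟩ := hubar_mem
    have hceq : c = fun _ => (1 : ZMod 2) := by
      funext i
      have hi : c i ≠ 0 := by
        by_contra h0
        have h0' : c i = 0 := h0
        have hsub : univ.filter (fun j => c j ≠ 0) ⊆ univ.erase i := by
          intro j hj
          simp only [Finset.mem_filter, Finset.mem_univ, true_and] at hj
          refine Finset.mem_erase.mpr ⟨?_, Finset.mem_univ j⟩
          rintro rfl
          exact hj h0'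
        have hlt : hammingNorm c ≤ s - 1 := by
          have hcard := Finset.card_le_card hsub
          simpa [hammingNorm, Finset.card_erase_of_mem] using hcard
        omega
      have : ∀ a : ZMod 2, a ≠ 0 → a = 1 := by decide
      exact this _ hi
    exact hceq ▸ hc
  -- H1 : all-ones ∈ C → symmetry
  have H1 : (fun _ => (1 : ZMod 2)) ∈ C → ∀ u ≤ ubar,
      {c : Fin s → ZMod 2 | c ∈ C ∧ hammingNorm c = ubar - u}.ncard
        = {c : Fin s → ZMod 2 | c ∈ C ∧ hammingNorm c = u}.ncard := by
    intro h1 u hu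
    have hus : ubar = s := le_antisymm hubar_le (hone_norm ▸ hubar_max _ h1)
    have himg : {c : Fin s → ZMod 2 | c ∈ C ∧ hammingNorm c = ubar - u}
        = (fun c => c + fun _ => (1 : ZMod 2)) '' {c | c ∈ C ∧ hammingNorm c = u} := by
      ext d
      constructor
      · rintro ⟨hd, hdn⟩
        refine ⟨d + fun _ => (1 : ZMod 2), ⟨C.add_mem hd h1, ?_⟩, ?_⟩
        · rw [norm_add_one_aux]; omega
        · funext i
          have : ∀ a : ZMod 2, a + 1 + 1 = a := by decide
          simp [this]
      · rintro ⟨c, ⟨hc, hcn⟩, rfl⟩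
        refine ⟨C.add_mem hc h1, ?_⟩
        rw [norm_add_one_aux, hcn]
        omega
    rw [himg, Set.ncard_image_of_injective _ (add_left_injective _)]
  -- H2 : symmetry → ubar = s
  have H2 : (∀ u ≤ ubar,
      {c : Fin s → ZMod 2 | c ∈ C ∧ hammingNorm c = ubar - u}.ncard
        = {c : Fin s → ZMod 2 | c ∈ C ∧ hammingNorm c = u}.ncard) → ubar = s := by
    intro hsym
    set K : Finset (Fin s → ZMod 2) := univ.filter (fun c => c ∈ C) with hK
    have hKmem : ∀ c, c ∈ K ↔ c ∈ C := by intro c; simp [hK]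
    have hKpos : 0 < K.card :=
      Finset.card_pos.mpr ⟨0, (hKmem 0).mpr C.zero_mem⟩
    -- each coordinate is nonzero on exactly half of K
    have hhalf : ∀ i : Fin s, 2 * (K.filter (fun c => c i ≠ 0)).card = K.card := by
      intro i
      obtain ⟨c₀, hc₀, hc₀i⟩ := hdual i
      have hflip : ∀ a : ZMod 2, a + c₀ i ≠ 0 ↔ ¬ a ≠ 0 := by
        have : c₀ i = 1 := by
          have : ∀ a : ZMod 2, a ≠ 0 → a = 1 := by decide
          exact this _ hc₀i
        rw [this]; decide
      have hbij : (K.filter (fun c => c i ≠ 0)).card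
          = (K.filter (fun c => ¬ c i ≠ 0)).card := by
        apply Finset.card_bij' (fun c _ => c + c₀) (fun c _ => c + c₀)
        · intro c hc
          simp only [Finset.mem_filter] at hc ⊢
          refine ⟨(hKmem _).mpr (C.add_mem ((hKmem _).mp hc.1) hc₀), ?_⟩
          have := (hflip (c i)).not.mpr (by simpa using hc.2)
          simpa using this
        · intro c hc
          simp only [Finset.mem_filter] at hc ⊢
          refine ⟨(hKmem _).mpr (C.add_mem ((hKmem _).mp hc.1) hc₀), ?_⟩
          exact (hflip (c i)).mpr hc.2
        · intro c _
          funext j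
          have : ∀ a b : ZMod 2, a + b + b = a := by decide
          simp [this]
        · intro c _
          funext j
          have : ∀ a b : ZMod 2, a + b + b = a := by decide
          simp [this]
      have hpart : (K.filter (fun c => c i ≠ 0)).card
          + (K.filter (fun c => ¬ c i ≠ 0)).card = K.card :=
        Finset.card_filter_add_card_filter_not (fun c : Fin s → ZMod 2 => c i ≠ 0)
      rw [← hbij] at hpart
      rw [two_mul]
      exact hpart
    -- total weight
    have hsum : 2 * ∑ c ∈ K, hammingNorm c = s * K.card := by
      have hswap : ∑ c ∈ K, hammingNorm c
          = ∑ i : Fin s, (K.filter (fun c => c i ≠ 0)).card := by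
        simp_rw [hammingNorm, Finset.card_filter]
        rw [Finset.sum_comm]
      rw [hswap, Finset.mul_sum]
      simp_rw [hhalf]
      simp [Finset.sum_const, Finset.card_univ, mul_comm]
    -- weight distribution
    set A : ℕ → ℕ := fun u => (K.filter (fun c => hammingNorm c = u)).card with hA
    have hAsym : ∀ u ≤ ubar, A (ubar - u) = A u := by
      intro u hu
      have h := hsym u hu
      have hconv : ∀ v : ℕ, {c : Fin s → ZMod 2 | c ∈ C ∧ hammingNorm c = v}.ncard = A v := by
        intro v
        have hseteq : {c : Fin s → ZMod 2 | c ∈ C ∧ hammingNorm c = v}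
            = ↑(K.filter (fun c => hammingNorm c = v)) := by
          ext c
          simp [hK]
        rw [hseteq, Set.ncard_coe_finset]
      rw [hconv, hconv] at h
      exact h
    have hmaps : ∀ c ∈ K, hammingNorm c ∈ range (ubar + 1) := fun c hc =>
      Finset.mem_range.mpr (Nat.lt_succ_of_le (hubar_max c ((hKmem c).mp hc)))
    have hfib : ∑ c ∈ K, hammingNorm c = ∑ u ∈ range (ubar + 1), A u * u := by
      rw [← Finset.sum_fiberwise_of_maps_to hmaps (fun c => hammingNorm c)]
      refine Finset.sum_congr rfl fun u _ => ?_
      rw [Finset.sum_congr rfl (fun c hc => (Finset.mem_filter.mp hc).2)]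
      simp [hA, mul_comm]
    have hcardfib : K.card = ∑ u ∈ range (ubar + 1), A u :=
      Finset.card_eq_sum_card_fiberwise hmaps
    have hrefl : ∑ u ∈ range (ubar + 1), A u * (ubar - u)
        = ∑ u ∈ range (ubar + 1), A u * u := by
      rw [← Finset.sum_range_reflect (fun j => A j * j) (ubar + 1)]
      refine Finset.sum_congr rfl fun j hj => ?_
      have hj' : j ≤ ubar := Nat.lt_succ_iff.mp (Finset.mem_range.mp hj)
      rw [show ubar + 1 - 1 - j = ubar - j from by omega, hAsym j hj']
    have hcomb : ∀ u ∈ range (ubar + 1), A u * u + A u * (ubar - u) = A u * ubar := by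
      intro u hu
      have : u ≤ ubar := Nat.lt_succ_iff.mp (Finset.mem_range.mp hu)
      rw [← Nat.mul_add, show u + (ubar - u) = ubar from by omega]
    have h2 : 2 * ∑ c ∈ K, hammingNorm c = ubar * K.card := by
      calc 2 * ∑ c ∈ K, hammingNorm c
          = ∑ u ∈ range (ubar + 1), A u * u + ∑ u ∈ range (ubar + 1), A u * (ubar - u) := by
            rw [hfib, hrefl, two_mul]
        _ = ∑ u ∈ range (ubar + 1), (A u * u + A u * (ubar - u)) :=
            Finset.sum_add_distrib.symm
        _ = ∑ u ∈ range (ubar + 1), A u * ubar := Finset.sum_congr rfl hcomb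
        _ = (∑ u ∈ range (ubar + 1), A u) * ubar := (Finset.sum_mul _ _ _).symm
        _ = ubar * K.card := by rw [← hcardfib, mul_comm]
    have : s * K.card = ubar * K.card := by omega
    exact (Nat.eq_of_mul_eq_mul_right hKpos this.symm)
  exact ⟨⟨fun h => H3 (H2 h), fun h => H1 h⟩, ⟨H2, fun h => H1 (H3 h)⟩⟩
end

section
/- Let z > 0 and set α = f(z) (so 0 < α < M ≤ 1). Define β = qα, y₀ = α/((1−α)z) and x₀ = (α/(1−α))^{1−q} · z^q. Then: (i) x₀y₀^q/(1 + x₀y₀^q) = α = β/q; (ii) z·y₀/(1 + z·y₀) = β/q; (iii) c Σ_{t∈I_c} γ_t z A_t′(z)/A_t(z) = β/q; and (iv) log(1 + x₀y₀^q) − α log x₀ + q c Σ_{t∈I_c} γ_t log A_t(z) + q log(1 − β/q) = (1−q)·h(α) − qα·log z + q c Σ_{t∈I_c} γ_t log A_t(z). Hence, for a GLDPC ensemble whose VNs are all length-q repetition codes (so each VN has IO-WEF B(x,y) = 1 + x y^q and ∫λ = 1/q), the growth-rate formula of Theorem 1 evaluates to G(α) = (1−q)h(α) − qα log f⁻¹(α)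 + q c Σ_{t∈I_c} γ_t log A_t(f⁻¹(α)). -/
open Finset Filter Real Topology

/-- The binary entropy function (in nats). -/
noncomputable def hEnt (x : ℝ) : ℝ := -x * Real.log x - (1 - x) * Real.log (1 - x)

lemma z_mul_deriv_Afun {ι : Type*} (s : ι → ℕ) (a : ι → ℕ → ℝ) (t : ι) (z : ℝ) :
    z * deriv (Afun s a t) z = ∑ u ∈ Finset.range (s t + 1), (u : ℝ) * a t u * z ^ u := by
  have hd : HasDerivAt (Afun s a t)
      (∑ u ∈ Finset.range (s t + 1), a t u * ((u : ℝ) * z ^ (u - 1))) z := by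
    have : HasDerivAt (fun x : ℝ => ∑ u ∈ Finset.range (s t + 1), a t u * x ^ u)
        (∑ u ∈ Finset.range (s t + 1), a t u * ((u : ℝ) * z ^ (u - 1))) z :=
      HasDerivAt.fun_sum (fun u _ => (hasDerivAt_pow u z).const_mul (a t u))
    exact this
  rw [hd.deriv, Finset.mul_sum]
  refine Finset.sum_congr rfl fun u _ => ?_
  cases u with
  | zero => simp
  | succ n => push_cast; rw [pow_succ]; ring

/-- under the normalization `c ⬝ ∑_t γ_t s_t = 1`:  let `z > 0`, set `α = f(z)`
(so `0 < α < M ≤ 1`), `β = qα`, `y₀ = α/((1−α)z)`, `x₀ = (α/(1−α))^{1−q} z^q`.  Then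
(i) `x₀y₀^q/(1+x₀y₀^q) = α = β/q`; (ii) `z y₀/(1+z y₀) = β/q`;
(iii) `c ∑_t γ_t z A_t′(z)/A_t(z) = β/q`; and (iv)
`log(1+x₀y₀^q) − α log x₀ + qc ∑_t γ_t log A_t(z) + q log(1−β/q)
  = (1−q)h(α) − qα log z + qc ∑_t γ_t log A_t(z)`
(the growth-rate formula of Theorem 1 evaluates to the repetition-VN spectral shape). -/
theorem stmt_9 {ι : Type*} [Fintype ι] [Nonempty ι]
    (q : ℕ) (hq : 2 ≤ q)
    (r s : ι → ℕ) (h2r : ∀ t, 2 ≤ r t) (hrs : ∀ t, r t ≤ s t)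
    (a : ι → ℕ → ℝ)
    (ha0 : ∀ t, a t 0 = 1)
    (hmid : ∀ t u, 0 < u → u < r t → a t u = 0)
    (hhigh : ∀ t u, s t < u → a t u = 0)
    (hnn : ∀ t u, 0 ≤ a t u)
    (har : ∀ t, 0 < a t (r t))
    (ubar : ι → ℕ)
    (hubar : ∀ t, 0 < a t (ubar t) ∧ ∀ u, a t u ≠ 0 → u ≤ ubar t)
    (γ : ι → ℝ) (hγ : ∀ t, 0 < γ t) (c : ℝ) (hc : 0 < c)
    (hnorm : c * ∑ t, γ t * (s t : ℝ) = 1) :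
    ∀ z : ℝ, 0 < z →
      (0 < ff s a γ c z ∧ ff s a γ c z < c * ∑ t, γ t * (ubar t : ℝ) ∧
        c * ∑ t, γ t * (ubar t : ℝ) ≤ 1) ∧
      (let α : ℝ := ff s a γ c z
       let β : ℝ := (q : ℝ) * α
       let y0 : ℝ := α / ((1 - α) * z)
       let x0 : ℝ := (α / (1 - α)) ^ ((1 : ℤ) - (q : ℤ)) * z ^ q
       x0 * y0 ^ q / (1 + x0 * y0 ^ q) = α ∧
       α = β / q ∧
       z * y0 / (1 + z * y0) = β / q ∧
       c * ∑ t, γ t * (z * deriv (Afun s a t) z) / Afun s a t z = β / q ∧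
       (Real.log (1 + x0 * y0 ^ q) - α * Real.log x0
           + (q : ℝ) * c * ∑ t, γ t * Real.log (Afun s a t z)
           + (q : ℝ) * Real.log (1 - β / q)
         = (1 - (q : ℝ)) * hEnt α - (q : ℝ) * α * Real.log z
           + (q : ℝ) * c * ∑ t, γ t * Real.log (Afun s a t z))) := by
  intro z hz
  have hzne : z ≠ 0 := hz.ne'
  -- basic facts about ubar
  have hub2 : ∀ t, 2 ≤ ubar t := fun t =>
    le_trans (h2r t) ((hubar t).2 (r t) (har t).ne')
  have hubs : ∀ t, ubar t ≤ s t := by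
    intro t
    by_contra h
    exact ((hubar t).1.ne' (hhigh t (ubar t) (lt_of_not_ge h)))
  -- positivity of A
  have hA1 : ∀ t, (1 : ℝ) ≤ Afun s a t z := by
    intro t
    have h0 : (0 : ℕ) ∈ Finset.range (s t + 1) := by simp
    calc (1 : ℝ) = a t 0 * z ^ 0 := by simp [ha0 t]
    _ ≤ ∑ u ∈ Finset.range (s t + 1), a t u * z ^ u :=
        Finset.single_le_sum (f := fun u => a t u * z ^ u)
          (fun u _ => mul_nonneg (hnn t u) (pow_pos hz u).le) h0
  have hApos : ∀ t, (0 : ℝ) < Afun s a t z := fun t => lt_of_lt_of_le one_pos (hA1 t)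
  -- the numerator D
  set D : ι → ℝ := fun t => ∑ u ∈ Finset.range (s t + 1), (u : ℝ) * a t u * z ^ u with hD
  have hDpos : ∀ t, 0 < D t := by
    intro t
    refine Finset.sum_pos'
      (fun u _ => mul_nonneg (mul_nonneg (Nat.cast_nonneg u) (hnn t u)) (pow_pos hz u).le)
      ⟨r t, by simp [Nat.lt_succ_of_le (hrs t)], ?_⟩
    have hr0 : (0:ℝ) < (r t : ℝ) := by exact_mod_cast lt_of_lt_of_le two_pos (h2r t)
    exact mul_pos (mul_pos hr0 (har t)) (pow_pos hz _)
  have hDlt : ∀ t, D t < (ubar t : ℝ) * Afun s a t z := by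
    intro t
    have h0 : (0 : ℕ) ∈ Finset.range (s t + 1) := by simp
    rw [Afun, Finset.mul_sum]
    refine Finset.sum_lt_sum (fun u _ => ?_) ⟨0, h0, ?_⟩
    · rcases eq_or_ne (a t u) 0 with h | h
      · simp [h]
      · have hu : (u : ℝ) ≤ (ubar t : ℝ) := by exact_mod_cast (hubar t).2 u h
        have : (0:ℝ) ≤ a t u * z ^ u := mul_nonneg (hnn t u) (pow_pos hz u).le
        calc (u : ℝ) * a t u * z ^ u = (u:ℝ) * (a t u * z ^ u) := by ring
        _ ≤ (ubar t : ℝ) * (a t u * z ^ u) := mul_le_mul_of_nonneg_right hu this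
    · have h2 : (0:ℝ) < (ubar t : ℝ) := by exact_mod_cast lt_of_lt_of_le two_pos (hub2 t)
      simpa [ha0 t] using h2
  -- rewrite ff
  have hffeq : ff s a γ c z = c * ∑ t, γ t * D t / Afun s a t z := by
    unfold ff
    congr 1
    exact Finset.sum_congr rfl fun t _ => by rw [z_mul_deriv_Afun]
  have hffpos : 0 < ff s a γ c z := by
    rw [hffeq]
    refine mul_pos hc (Finset.sum_pos (fun t _ => ?_) Finset.univ_nonempty)
    exact div_pos (mul_pos (hγ t) (hDpos t)) (hApos t)
  have hfflt : ff s a γ c z < c * ∑ t, γ t * (ubar t : ℝ) := by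
    rw [hffeq]
    refine mul_lt_mul_of_pos_left (Finset.sum_lt_sum_of_nonempty Finset.univ_nonempty
      (fun t _ => ?_)) hc
    rw [mul_div_assoc]
    exact mul_lt_mul_of_pos_left ((div_lt_iff₀ (hApos t)).mpr (hDlt t)) (hγ t)
  have hM1 : c * ∑ t, γ t * (ubar t : ℝ) ≤ 1 := by
    rw [← hnorm]
    refine mul_le_mul_of_nonneg_left (Finset.sum_le_sum fun t _ => ?_) hc.le
    exact mul_le_mul_of_nonneg_left (by exact_mod_cast hubs t) (hγ t).le
  refine ⟨⟨hffpos, hfflt, hM1⟩, ?_⟩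
  intro α β y0 x0
  have hα0 : 0 < α := hffpos
  have hα1 : α < 1 := lt_of_lt_of_le hfflt hM1
  have h1α : (0:ℝ) < 1 - α := by linarith
  have hq0 : (0:ℝ) < (q:ℝ) := by exact_mod_cast lt_of_lt_of_le two_pos hq
  set w : ℝ := α / (1 - α) with hwdef
  have hw : 0 < w := div_pos hα0 h1α
  have hy0 : y0 = w / z := by
    show α / ((1 - α) * z) = α / (1 - α) / z
    rw [div_div]
  have hx : x0 * y0 ^ q = w := by
    show w ^ ((1:ℤ) - (q:ℤ)) * z ^ q * y0 ^ q = w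
    rw [hy0, div_pow, zpow_sub₀ hw.ne', zpow_one, zpow_natCast]
    field_simp
  have h1w : 1 + w = (1 - α)⁻¹ := by
    rw [hwdef]; field_simp; ring
  have hratio : w / (1 + w) = α := by
    rw [h1w, div_inv_eq_mul, hwdef]; field_simp
  have hβα : β / (q : ℝ) = α := by
    show (q:ℝ) * α / (q:ℝ) = α
    field_simp
  have hzy : z * y0 = w := by
    rw [hy0]; field_simp
  refine ⟨by rw [hx]; exact hratio, hβα.symm, by rw [hzy, hratio]; exact hβα.symm, ?_, ?_⟩
  · show ff s a γ c z = β / (q:ℝ)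
    rw [hβα]
  · have hlog1w : Real.log (1 + w) = -Real.log (1 - α) := by rw [h1w, Real.log_inv]
    have hlogw : Real.log w = Real.log α - Real.log (1 - α) :=
      Real.log_div hα0.ne' h1α.ne'
    have hlogx0 : Real.log x0 = (1 - (q:ℝ)) * Real.log w + (q:ℝ) * Real.log z := by
      show Real.log (w ^ ((1:ℤ) - (q:ℤ)) * z ^ q) = _
      rw [Real.log_mul (zpow_ne_zero _ hw.ne') (pow_ne_zero _ hzne), Real.log_zpow,
        Real.log_pow]
      push_cast
      ring
    rw [hx, hlog1w, hlogx0, hβα, hlogw]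
    simp only [hEnt]
    ring
end

section
/- Let I ⊆ (0,∞) be an open interval and let x₀, y₀, z₀, β : I → (0,∞) be differentiable functions such that β(α)·∫λ < 1 for all α ∈ I and, for every α ∈ I, the saddle-point system holds at (α; x₀(α), y₀(α), z₀(α), β(α)). Then the function G : I → ℝ defined by G(α) = Σ_{t∈I_v} δ_t log B_t(x₀(α),y₀(α)) − α log x₀(α) + (∫ρ/∫λ) Σ_{t∈I_c} γ_t log A_t(z₀(α)) + log(1 − β(α)∫λ)/∫λ is differentiable on I with G′(α) = −log x₀(α) for every α ∈ I. In particular, stationary points of G occur exactly at those α for which x₀(α) = 1. -/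
open Finset Filter Real Topology

/-- The CN weight enumerating polynomial `A_t(z) = 1 + ∑_{u=r_t}^{s_t} a_{t,u} z^u`. -/
noncomputable def AIcc {ι : Type*} (r s : ι → ℕ) (a : ι → ℕ → ℝ) (t : ι) (z : ℝ) : ℝ :=
  1 + ∑ u ∈ Finset.Icc (r t) (s t), a t u * z ^ u

/-- The VN input–output weight enumerating polynomial
`B_t(x,y) = 1 + ∑_{u=1}^{k_t} ∑_{v=p_t}^{q_t} b_{t,u,v} x^u y^v`. -/
noncomputable def BIcc {ι : Type*} (k p q : ι → ℕ) (b : ι → ℕ → ℕ → ℝ) (t : ι)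
    (x y : ℝ) : ℝ :=
  1 + ∑ u ∈ Finset.Icc 1 (k t), ∑ v ∈ Finset.Icc (p t) (q t), b t u v * x ^ u * y ^ v

/-- `∫ρ = ∑_t ρ_t/s_t` (and likewise `∫λ`). -/
noncomputable def intden {ι : Type*} [Fintype ι] (w : ι → ℝ) (n : ι → ℕ) : ℝ :=
  ∑ t, w t / n t

/-- `γ_t = ρ_t/(s_t ∫ρ)` (and likewise `δ_t = λ_t/(q_t ∫λ)`). -/
noncomputable def nodefrac {ι : Type*} [Fintype ι] (w : ι → ℝ) (n : ι → ℕ) (t : ι) : ℝ :=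
  w t / (n t * intden w n)

/-- The growth-rate expression
`G(α) = ∑_t δ_t log B_t(x₀,y₀) − α log x₀ + (∫ρ/∫λ) ∑_t γ_t log A_t(z₀) + log(1−β∫λ)/∫λ`,
evaluated along functions `x₀, y₀, z₀, β` of `α`. -/
noncomputable def Gfun {ιc ιv : Type*} [Fintype ιc] [Fintype ιv]
    (rc sc : ιc → ℕ) (a : ιc → ℕ → ℝ)
    (kv pv qv : ιv → ℕ) (b : ιv → ℕ → ℕ → ℝ)
    (ρ : ιc → ℝ) (lam : ιv → ℝ)
    (x₀ y₀ z₀ β : ℝ → ℝ) (α : ℝ) : ℝ :=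
  ∑ t, nodefrac lam qv t * Real.log (BIcc kv pv qv b t (x₀ α) (y₀ α))
    - α * Real.log (x₀ α)
    + (intden ρ sc / intden lam qv) *
        ∑ t, nodefrac ρ sc t * Real.log (AIcc rc sc a t (z₀ α))
    + Real.log (1 - β α * intden lam qv) / intden lam qv

noncomputable def dAIcc {ι : Type*} (r s : ι → ℕ) (a : ι → ℕ → ℝ) (t : ι) (z : ℝ) : ℝ :=
  ∑ u ∈ Finset.Icc (r t) (s t), a t u * (u * z ^ (u - 1))

noncomputable def dBx {ι : Type*} (k p q : ι → ℕ) (b : ι → ℕ → ℕ → ℝ) (t : ι) (x y : ℝ) : ℝ :=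
  ∑ u ∈ Finset.Icc 1 (k t), ∑ v ∈ Finset.Icc (p t) (q t), b t u v * (u * x ^ (u - 1)) * y ^ v

noncomputable def dBy {ι : Type*} (k p q : ι → ℕ) (b : ι → ℕ → ℕ → ℝ) (t : ι) (x y : ℝ) : ℝ :=
  ∑ u ∈ Finset.Icc 1 (k t), ∑ v ∈ Finset.Icc (p t) (q t), b t u v * x ^ u * (v * y ^ (v - 1))

lemma hasDerivAt_AIcc {ι : Type*} (r s : ι → ℕ) (a : ι → ℕ → ℝ) (t : ι) (z : ℝ) :
    HasDerivAt (AIcc r s a t) (dAIcc r s a t z) z := by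
  have h : ∀ u ∈ Finset.Icc (r t) (s t),
      HasDerivAt (fun z : ℝ => a t u * z ^ u) (a t u * (u * z ^ (u - 1))) z :=
    fun u _ => (hasDerivAt_pow u z).const_mul _
  have := (HasDerivAt.fun_sum h).const_add 1
  exact this

lemma hasDerivAt_BIcc_x {ι : Type*} (k p q : ι → ℕ) (b : ι → ℕ → ℕ → ℝ) (t : ι) (x y : ℝ) :
    HasDerivAt (fun x => BIcc k p q b t x y) (dBx k p q b t x y) x := by
  have h : ∀ u ∈ Finset.Icc 1 (k t), HasDerivAt
      (fun x : ℝ => ∑ v ∈ Finset.Icc (p t) (q t), b t u v * x ^ u * y ^ v)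
      (∑ v ∈ Finset.Icc (p t) (q t), b t u v * (u * x ^ (u - 1)) * y ^ v) x := by
    intro u _
    refine HasDerivAt.fun_sum fun v _ => ?_
    exact (((hasDerivAt_pow u x).const_mul (b t u v)).mul_const (y ^ v))
  have := (HasDerivAt.fun_sum h).const_add 1
  simpa [BIcc, dBx] using this

lemma hasDerivAt_BIcc_y {ι : Type*} (k p q : ι → ℕ) (b : ι → ℕ → ℕ → ℝ) (t : ι) (x y : ℝ) :
    HasDerivAt (fun y => BIcc k p q b t x y) (dBy k p q b t x y) y := by
  have h : ∀ u ∈ Finset.Icc 1 (k t), HasDerivAt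
      (fun y : ℝ => ∑ v ∈ Finset.Icc (p t) (q t), b t u v * x ^ u * y ^ v)
      (∑ v ∈ Finset.Icc (p t) (q t), b t u v * x ^ u * (v * y ^ (v - 1))) y := by
    intro u _
    refine HasDerivAt.fun_sum fun v _ => ?_
    exact ((hasDerivAt_pow v y).const_mul (b t u v * x ^ u))
  have := (HasDerivAt.fun_sum h).const_add 1
  simpa [BIcc, dBy] using this

lemma hasDerivAt_BIcc_comp {ι : Type*} (k p q : ι → ℕ) (b : ι → ℕ → ℕ → ℝ) (t : ι)
    {x₀ y₀ : ℝ → ℝ} {α x' y' : ℝ}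
    (hx : HasDerivAt x₀ x' α) (hy : HasDerivAt y₀ y' α) :
    HasDerivAt (fun s => BIcc k p q b t (x₀ s) (y₀ s))
      (dBx k p q b t (x₀ α) (y₀ α) * x' + dBy k p q b t (x₀ α) (y₀ α) * y') α := by
  have h : ∀ u ∈ Finset.Icc 1 (k t), ∀ v ∈ Finset.Icc (p t) (q t),
      HasDerivAt (fun s : ℝ => b t u v * x₀ s ^ u * y₀ s ^ v)
        (b t u v * (↑u * x₀ α ^ (u - 1) * x') * y₀ α ^ v
          + b t u v * x₀ α ^ u * (↑v * y₀ α ^ (v - 1) * y')) α := by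
    intro u _ v _
    exact ((hx.pow u).const_mul (b t u v)).mul (hy.pow v)
  have h2 := (HasDerivAt.fun_sum (fun u hu => HasDerivAt.fun_sum (h u hu))).const_add 1
  have heq : (∑ u ∈ Finset.Icc 1 (k t), ∑ v ∈ Finset.Icc (p t) (q t),
      (b t u v * (↑u * x₀ α ^ (u - 1) * x') * y₀ α ^ v
        + b t u v * x₀ α ^ u * (↑v * y₀ α ^ (v - 1) * y')))
      = dBx k p q b t (x₀ α) (y₀ α) * x' + dBy k p q b t (x₀ α) (y₀ α) * y' := by
    unfold dBx dBy
    rw [Finset.sum_mul, Finset.sum_mul, ← Finset.sum_add_distrib]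
    refine Finset.sum_congr rfl fun u _ => ?_
    rw [Finset.sum_mul, Finset.sum_mul, ← Finset.sum_add_distrib]
    exact Finset.sum_congr rfl fun v _ => by ring
  rw [heq] at h2
  simpa [BIcc] using h2

lemma AIcc_pos {ι : Type*} (r s : ι → ℕ) (a : ι → ℕ → ℝ) (t : ι) {z : ℝ}
    (hann : ∀ u, 0 ≤ a t u) (hz : 0 ≤ z) : 0 < AIcc r s a t z := by
  have : 0 ≤ ∑ u ∈ Finset.Icc (r t) (s t), a t u * z ^ u :=
    Finset.sum_nonneg fun u _ => mul_nonneg (hann u) (pow_nonneg hz u)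
  unfold AIcc; linarith

lemma BIcc_pos {ι : Type*} (k p q : ι → ℕ) (b : ι → ℕ → ℕ → ℝ) (t : ι) {x y : ℝ}
    (hbnn : ∀ u v, 0 ≤ b t u v) (hx : 0 ≤ x) (hy : 0 ≤ y) : 0 < BIcc k p q b t x y := by
  have : 0 ≤ ∑ u ∈ Finset.Icc 1 (k t), ∑ v ∈ Finset.Icc (p t) (q t), b t u v * x ^ u * y ^ v :=
    Finset.sum_nonneg fun u _ => Finset.sum_nonneg fun v _ =>
      mul_nonneg (mul_nonneg (hbnn u v) (pow_nonneg hx u)) (pow_nonneg hy v)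
  unfold BIcc; linarith

lemma scalar_key (x0 y0 z0 βv β' x' y' z' c RR P Q al L : ℝ)
    (hx0 : x0 ≠ 0) (hy0 : y0 ≠ 0) (hz0 : z0 ≠ 0) (hc : c ≠ 0) (hone : 1 - βv*c ≠ 0)
    (h2 : x0 * P = al) (h3 : y0 * Q = βv) (h1 : z0 * RR = βv)
    (h4 : βv*c*(1+y0*z0) = y0*z0)
    (h5 : β'*c*(1+y0*z0) + βv*c*(y'*z0+y0*z') = y'*z0+y0*z') :
    P*x' + Q*y' - (1*L + al*(x'/x0)) + RR*z' + ((0 - β'*c)/(1-βv*c))/c = -L := by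
  have hP : P = al/x0 := by rw [eq_div_iff hx0]; linarith
  have hQ : Q = βv/y0 := by rw [eq_div_iff hy0]; linarith
  have hR : RR = βv/z0 := by rw [eq_div_iff hz0]; linarith
  have hw : (1 - βv*c)*(1+y0*z0) = 1 := by linear_combination -h4
  have e1 : βv*c = y0*z0*(1-βv*c) := by linear_combination h4
  have e2 : β'*c = (y'*z0+y0*z')*(1-βv*c)^2 := by
    linear_combination (1-βv*c)*h5 - β'*c*hw
  subst hP hQ hR
  field_simp
  linear_combination (x0*(1-βv*c)*(y'*z0+y0*z')) * e1 - (x0*y0*z0) * e2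

/-- if differentiable positive functions `x₀, y₀, z₀, β` on an open interval
`I ⊆ (0,∞)` satisfy `β∫λ < 1` and the saddle-point system (E1)–(E4) on `I`, then `G` is
differentiable on `I` with `G′(α) = −log x₀(α)`; in particular `G′(α) = 0 ↔ x₀(α) = 1`. -/
theorem stmt_11 {ιc ιv : Type*} [Fintype ιc] [Nonempty ιc] [Fintype ιv] [Nonempty ιv]
    (rc sc : ιc → ℕ) (h2r : ∀ t, 2 ≤ rc t) (hrs : ∀ t, rc t ≤ sc t)
    (a : ιc → ℕ → ℝ) (hann : ∀ t u, 0 ≤ a t u) (har : ∀ t, 0 < a t (rc t))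
    (kv pv qv : ιv → ℕ) (hkv : ∀ t, 1 ≤ kv t) (hpv : ∀ t, 2 ≤ pv t) (hpq : ∀ t, pv t ≤ qv t)
    (b : ιv → ℕ → ℕ → ℝ) (hbnn : ∀ t u v, 0 ≤ b t u v)
    (hbne : ∀ t, ∃ u ∈ Finset.Icc 1 (kv t), ∃ v ∈ Finset.Icc (pv t) (qv t), b t u v ≠ 0)
    (ρ : ιc → ℝ) (lam : ιv → ℝ) (hρ : ∀ t, 0 < ρ t) (hlam : ∀ t, 0 < lam t)
    (hρ1 : ∑ t, ρ t = 1) (hlam1 : ∑ t, lam t = 1)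
    (lo hi : ℝ) (hlo : 0 ≤ lo)
    (x₀ y₀ z₀ β : ℝ → ℝ)
    (hpos : ∀ α ∈ Set.Ioo lo hi, 0 < x₀ α ∧ 0 < y₀ α ∧ 0 < z₀ α ∧ 0 < β α)
    (hdiff : ∀ α ∈ Set.Ioo lo hi, DifferentiableAt ℝ x₀ α ∧ DifferentiableAt ℝ y₀ α ∧
      DifferentiableAt ℝ z₀ α ∧ DifferentiableAt ℝ β α)
    (hβL : ∀ α ∈ Set.Ioo lo hi, β α * intden lam qv < 1)
    (hE1 : ∀ α ∈ Set.Ioo lo hi,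
      z₀ α * ((intden ρ sc / intden lam qv) *
        ∑ t, nodefrac ρ sc t * deriv (AIcc rc sc a t) (z₀ α) / AIcc rc sc a t (z₀ α)) = β α)
    (hE2 : ∀ α ∈ Set.Ioo lo hi,
      x₀ α * ∑ t, nodefrac lam qv t *
        deriv (fun x => BIcc kv pv qv b t x (y₀ α)) (x₀ α)
          / BIcc kv pv qv b t (x₀ α) (y₀ α) = α)
    (hE3 : ∀ α ∈ Set.Ioo lo hi,
      y₀ α * ∑ t, nodefrac lam qv t *
        deriv (fun y => BIcc kv pv qv b t (x₀ α) y) (y₀ α)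
          / BIcc kv pv qv b t (x₀ α) (y₀ α) = β α)
    (hE4 : ∀ α ∈ Set.Ioo lo hi,
      (β α * intden lam qv) * (1 + y₀ α * z₀ α) = y₀ α * z₀ α) :
    ∀ α ∈ Set.Ioo lo hi,
      HasDerivAt (Gfun rc sc a kv pv qv b ρ lam x₀ y₀ z₀ β) (-Real.log (x₀ α)) α ∧
      (deriv (Gfun rc sc a kv pv qv b ρ lam x₀ y₀ z₀ β) α = 0 ↔ x₀ α = 1) := by
  intro α hα
  obtain ⟨hx0, hy0, hz0, hb0⟩ := hpos α hα
  obtain ⟨hdx, hdy, hdz, hdb⟩ := hdiff α hα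
  have hx := hdx.hasDerivAt
  have hy := hdy.hasDerivAt
  have hz := hdz.hasDerivAt
  have hβ := hdb.hasDerivAt
  have hc : 0 < intden lam qv := by
    refine Finset.sum_pos (fun t _ => div_pos (hlam t) ?_) Finset.univ_nonempty
    exact_mod_cast Nat.lt_of_lt_of_le (by norm_num) ((hpv t).trans (hpq t))
  have hone : 0 < 1 - β α * intden lam qv := by have := hβL α hα; linarith
  have hApos : ∀ t, 0 < AIcc rc sc a t (z₀ α) := fun t => AIcc_pos rc sc a t (hann t) hz0.le
  have hBpos : ∀ t, 0 < BIcc kv pv qv b t (x₀ α) (y₀ α) :=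
    fun t => BIcc_pos kv pv qv b t (hbnn t) hx0.le hy0.le
  -- derivative pieces
  have hT1 : HasDerivAt
      (fun s => ∑ t, nodefrac lam qv t * Real.log (BIcc kv pv qv b t (x₀ s) (y₀ s)))
      (∑ t, nodefrac lam qv t *
        ((dBx kv pv qv b t (x₀ α) (y₀ α) * deriv x₀ α
          + dBy kv pv qv b t (x₀ α) (y₀ α) * deriv y₀ α) / BIcc kv pv qv b t (x₀ α) (y₀ α))) α :=
    HasDerivAt.fun_sum fun t _ =>
      ((hasDerivAt_BIcc_comp kv pv qv b t hx hy).log (hBpos t).ne').const_mul _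
  have hT2 : HasDerivAt (fun s => s * Real.log (x₀ s))
      (1 * Real.log (x₀ α) + α * (deriv x₀ α / x₀ α)) α :=
    (hasDerivAt_id α).mul (hx.log hx0.ne')
  have hT3inner : ∀ t : ιc, HasDerivAt (fun s => Real.log (AIcc rc sc a t (z₀ s)))
      (dAIcc rc sc a t (z₀ α) * deriv z₀ α / AIcc rc sc a t (z₀ α)) α := by
    intro t
    have := (((hasDerivAt_AIcc rc sc a t (z₀ α)).comp α hz).log (hApos t).ne')
    simpa [Function.comp] using this
  have hT3 : HasDerivAt
      (fun s => (intden ρ sc / intden lam qv) *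
        ∑ t, nodefrac ρ sc t * Real.log (AIcc rc sc a t (z₀ s)))
      ((intden ρ sc / intden lam qv) *
        ∑ t, nodefrac ρ sc t *
          (dAIcc rc sc a t (z₀ α) * deriv z₀ α / AIcc rc sc a t (z₀ α))) α :=
    (HasDerivAt.fun_sum fun t _ => (hT3inner t).const_mul _).const_mul _
  have hT4 : HasDerivAt (fun s => Real.log (1 - β s * intden lam qv) / intden lam qv)
      (((0 - deriv β α * intden lam qv) / (1 - β α * intden lam qv)) / intden lam qv) α :=
    (((hasDerivAt_const α 1).sub (hβ.mul_const _)).log hone.ne').div_const _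
  have hG : HasDerivAt (Gfun rc sc a kv pv qv b ρ lam x₀ y₀ z₀ β) (-Real.log (x₀ α)) α := by
    have htot := ((hT1.sub hT2).add hT3).add hT4
    refine htot.congr_deriv ?_
    symm
    -- goal: -Real.log (x₀ α) = Dtot
    -- rewrite the saddle point equations
    have hdA : ∀ t, deriv (AIcc rc sc a t) (z₀ α) = dAIcc rc sc a t (z₀ α) :=
      fun t => (hasDerivAt_AIcc rc sc a t (z₀ α)).deriv
    have hdBx' : ∀ t, deriv (fun x => BIcc kv pv qv b t x (y₀ α)) (x₀ α)
        = dBx kv pv qv b t (x₀ α) (y₀ α) :=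
      fun t => (hasDerivAt_BIcc_x kv pv qv b t (x₀ α) (y₀ α)).deriv
    have hdBy' : ∀ t, deriv (fun y => BIcc kv pv qv b t (x₀ α) y) (y₀ α)
        = dBy kv pv qv b t (x₀ α) (y₀ α) :=
      fun t => (hasDerivAt_BIcc_y kv pv qv b t (x₀ α) (y₀ α)).deriv
    have h1' := hE1 α hα
    have h2' := hE2 α hα
    have h3' := hE3 α hα
    simp only [hdA] at h1'
    simp only [hdBx'] at h2'
    simp only [hdBy'] at h3'
    have h4' := hE4 α hα
    -- differentiate E4
    have hwd : HasDerivAt (fun s => y₀ s * z₀ s)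
        (deriv y₀ α * z₀ α + y₀ α * deriv z₀ α) α := hy.mul hz
    have hLd : HasDerivAt (fun s => (β s * intden lam qv) * (1 + y₀ s * z₀ s))
        (deriv β α * intden lam qv * (1 + y₀ α * z₀ α)
          + β α * intden lam qv * (deriv y₀ α * z₀ α + y₀ α * deriv z₀ α)) α := by
      have := (hβ.mul_const (intden lam qv)).mul ((hasDerivAt_const α (1:ℝ)).add hwd)
      exact this.congr_deriv (by simp only [Pi.add_apply]; ring)
    have heq : (fun s => (β s * intden lam qv) * (1 + y₀ s * z₀ s))
        =ᶠ[nhds α] (fun s => y₀ s * z₀ s) := by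
      filter_upwards [isOpen_Ioo.mem_nhds hα] with s hs using hE4 s hs
    have h5' := hLd.unique (hwd.congr_of_eventuallyEq heq)
    -- split the sums
    have h1eq : (∑ t, nodefrac lam qv t *
          ((dBx kv pv qv b t (x₀ α) (y₀ α) * deriv x₀ α
            + dBy kv pv qv b t (x₀ α) (y₀ α) * deriv y₀ α) / BIcc kv pv qv b t (x₀ α) (y₀ α)))
        = (∑ t, nodefrac lam qv t * dBx kv pv qv b t (x₀ α) (y₀ α)
              / BIcc kv pv qv b t (x₀ α) (y₀ α)) * deriv x₀ α
          + (∑ t, nodefrac lam qv t * dBy kv pv qv b t (x₀ α) (y₀ α)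
              / BIcc kv pv qv b t (x₀ α) (y₀ α)) * deriv y₀ α := by
      rw [Finset.sum_mul, Finset.sum_mul, ← Finset.sum_add_distrib]
      exact Finset.sum_congr rfl fun t _ => by ring
    have h3eq : (∑ t, nodefrac ρ sc t *
          (dAIcc rc sc a t (z₀ α) * deriv z₀ α / AIcc rc sc a t (z₀ α)))
        = (∑ t, nodefrac ρ sc t * dAIcc rc sc a t (z₀ α) / AIcc rc sc a t (z₀ α))
            * deriv z₀ α := by
      rw [Finset.sum_mul]
      exact Finset.sum_congr rfl fun t _ => by ring
    rw [h1eq, h3eq]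
    have key := scalar_key (x₀ α) (y₀ α) (z₀ α) (β α) (deriv β α) (deriv x₀ α) (deriv y₀ α)
      (deriv z₀ α) (intden lam qv)
      ((intden ρ sc / intden lam qv) *
        ∑ t, nodefrac ρ sc t * dAIcc rc sc a t (z₀ α) / AIcc rc sc a t (z₀ α))
      (∑ t, nodefrac lam qv t * dBx kv pv qv b t (x₀ α) (y₀ α)
        / BIcc kv pv qv b t (x₀ α) (y₀ α))
      (∑ t, nodefrac lam qv t * dBy kv pv qv b t (x₀ α) (y₀ α)
        / BIcc kv pv qv b t (x₀ α) (y₀ α))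
      α (Real.log (x₀ α)) hx0.ne' hy0.ne' hz0.ne' hc.ne' hone.ne' h2' h3' h1' h4' h5'
    linear_combination -key
  refine ⟨hG, ?_⟩
  rw [hG.deriv, neg_eq_zero, Real.log_eq_zero]
  constructor
  · rintro (h | h | h)
    · exact absurd h hx0.ne'
    · exact h
    · linarith
  · intro h; exact Or.inr (Or.inl h)
end

section
/- Let ξ = p₁/q′ and θ = p₂/q′ with p₁, p₂, q′ positive integers, and suppose x₀, y₀ > 0 satisfy x₀ · ∂B/∂x(x₀,y₀)/B(x₀,y₀) = ξ and y₀ · ∂B/∂y(x₀,y₀)/B(x₀,y₀) = θ. Then, as m → ∞ along integers m for which the coefficient of x^{p₁m} y^{p₂m} in B(x,y)^{q′m} is nonzero, one has (1/(q′m)) · log(coefficient of x^{p₁m} y^{p₂m} in B(x,y)^{q′m}) → log B(x₀,y₀) − ξ log x₀ − θ log y₀. -/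
open Finset Filter Real Topology

/-- The bivariate polynomial `B(x,y) = 1 + ∑_{u=1}^{k} ∑_{v=c}^{d} B_{u,v} x^u y^v`
in `ℝ[x,y]`, with variable `0` playing the role of `x` and variable `1` that of `y`. -/
noncomputable def Bmv (k c d : ℕ) (b : ℕ → ℕ → ℝ) : MvPolynomial (Fin 2) ℝ :=
  1 + ∑ u ∈ Finset.Icc 1 k, ∑ v ∈ Finset.Icc c d,
    MvPolynomial.monomial (Finsupp.single (0 : Fin 2) u + Finsupp.single (1 : Fin 2) v) (b u v)

namespace S13

/-- the index box -/
def box (k c d : ℕ) : Finset (ℕ × ℕ) := Finset.Icc 1 k ×ˢ Finset.Icc c d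

/-- target exponent -/
noncomputable def μt (a₁ a₂ : ℕ) : Fin 2 →₀ ℕ :=
  Finsupp.single (0 : Fin 2) a₁ + Finsupp.single (1 : Fin 2) a₂

lemma μt_apply0 (a₁ a₂ : ℕ) : μt a₁ a₂ 0 = a₁ := by
  simp [μt, Finsupp.single_apply]

lemma μt_apply1 (a₁ a₂ : ℕ) : μt a₁ a₂ 1 = a₂ := by
  simp [μt, Finsupp.single_apply]

lemma μt_add (a₁ a₂ a₁' a₂' : ℕ) : μt a₁ a₂ + μt a₁' a₂' = μt (a₁ + a₁') (a₂ + a₂') := by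
  simp only [μt, Finsupp.single_add]; abel

lemma not_mem_box (k c d : ℕ) : (0,0) ∉ box k c d := by
  simp [box]

lemma Bmv_eq_sum (k c d : ℕ) (b : ℕ → ℕ → ℝ) :
    Bmv k c d b = ∑ i ∈ insert (0,0) (box k c d),
      MvPolynomial.monomial (μt i.1 i.2) (if i = (0,0) then 1 else b i.1 i.2) := by
  rw [Finset.sum_insert (not_mem_box k c d)]
  have h0 : (MvPolynomial.monomial (μt 0 0) (1:ℝ)) = 1 := by
    simp [μt]
  rw [if_pos rfl, h0, Bmv, box, Finset.sum_product' (f := fun u v =>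
    MvPolynomial.monomial (μt u v) (if ((u,v) : ℕ × ℕ) = (0,0) then 1 else b u v))]
  congr 1
  refine Finset.sum_congr rfl fun u hu => Finset.sum_congr rfl fun v hv => ?_
  have : ((u,v) : ℕ × ℕ) ≠ (0,0) := by
    simp only [Finset.mem_Icc] at hu
    intro h; exact absurd (congrArg Prod.fst h) (by simp; omega)
  rw [if_neg this]; rfl

lemma coeff_Bmv_nonneg (k c d : ℕ) (b : ℕ → ℕ → ℝ) (hbnn : ∀ u v, 0 ≤ b u v) (μ : Fin 2 →₀ ℕ) :
    0 ≤ MvPolynomial.coeff μ (Bmv k c d b) := by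
  rw [Bmv_eq_sum, MvPolynomial.coeff_sum]
  refine Finset.sum_nonneg fun i _ => ?_
  rw [MvPolynomial.coeff_monomial]
  split_ifs with h1 h2
  · exact zero_le_one
  · exact hbnn _ _
  · exact le_refl 0

lemma coeff_pow_nonneg (P : MvPolynomial (Fin 2) ℝ) (h : ∀ μ, 0 ≤ MvPolynomial.coeff μ P)
    (n : ℕ) (μ : Fin 2 →₀ ℕ) : 0 ≤ MvPolynomial.coeff μ (P ^ n) := by
  induction n generalizing μ with
  | zero =>
      rw [pow_zero, MvPolynomial.coeff_one]
      split_ifs <;> norm_num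
  | succ n ih =>
      rw [pow_succ, MvPolynomial.coeff_mul]
      exact Finset.sum_nonneg fun x _ => mul_nonneg (ih x.1) (h x.2)

lemma coeff_pow_superadd (P : MvPolynomial (Fin 2) ℝ) (h : ∀ μ, 0 ≤ MvPolynomial.coeff μ P)
    (μ₁ μ₂ : Fin 2 →₀ ℕ) (n₁ n₂ : ℕ) :
    MvPolynomial.coeff μ₁ (P ^ n₁) * MvPolynomial.coeff μ₂ (P ^ n₂) ≤
      MvPolynomial.coeff (μ₁ + μ₂) (P ^ (n₁ + n₂)) := by
  rw [pow_add, MvPolynomial.coeff_mul]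
  have hmem : (μ₁, μ₂) ∈ Finset.HasAntidiagonal.antidiagonal (μ₁ + μ₂) := by
    rw [Finset.HasAntidiagonal.mem_antidiagonal]
  exact Finset.single_le_sum (f := fun x => MvPolynomial.coeff x.1 (P ^ n₁) * MvPolynomial.coeff x.2 (P ^ n₂))
    (fun x _ => mul_nonneg (coeff_pow_nonneg P h n₁ x.1) (coeff_pow_nonneg P h n₂ x.2)) hmem

lemma coeff_le_eval (P : MvPolynomial (Fin 2) ℝ) (h : ∀ μ, 0 ≤ MvPolynomial.coeff μ P)
    (z : Fin 2 → ℝ) (hz : ∀ i, 0 < z i) (n : ℕ) (μ : Fin 2 →₀ ℕ) :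
    MvPolynomial.coeff μ (P ^ n) * ∏ i, z i ^ μ i ≤ (MvPolynomial.eval z P) ^ n := by
  have hnn := coeff_pow_nonneg P h n
  rw [← map_pow, MvPolynomial.eval_eq']
  by_cases hμ : MvPolynomial.coeff μ (P ^ n) = 0
  · rw [hμ, zero_mul]
    exact Finset.sum_nonneg fun i _ => mul_nonneg (hnn i) (Finset.prod_nonneg fun j _ => pow_nonneg (hz j).le _)
  · exact Finset.single_le_sum
      (f := fun dd => MvPolynomial.coeff dd (P ^ n) * ∏ i, z i ^ dd i)
      (fun i _ => mul_nonneg (hnn i) (Finset.prod_nonneg fun j _ => pow_nonneg (hz j).le _))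
      (by rwa [MvPolynomial.mem_support_iff])


lemma eval_monomial_μt (x₀ y₀ a : ℝ) (a₁ a₂ : ℕ) :
    MvPolynomial.eval ![x₀, y₀] (MvPolynomial.monomial (μt a₁ a₂) a) = a * (x₀ ^ a₁ * y₀ ^ a₂) := by
  rw [MvPolynomial.eval_monomial]
  congr 1
  rw [Finsupp.prod_pow]
  rw [Fin.prod_univ_two, μt_apply0, μt_apply1]
  norm_num

lemma eval_Bmv (k c d : ℕ) (b : ℕ → ℕ → ℝ) (x₀ y₀ : ℝ) :
    MvPolynomial.eval ![x₀, y₀] (Bmv k c d b)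
      = 1 + ∑ i ∈ box k c d, b i.1 i.2 * x₀ ^ i.1 * y₀ ^ i.2 := by
  rw [Bmv_eq_sum, map_sum, Finset.sum_insert (not_mem_box k c d)]
  congr 1
  · rw [if_pos rfl, eval_monomial_μt]; norm_num
  · refine Finset.sum_congr rfl fun i hi => ?_
    rw [if_neg (by rintro rfl; exact not_mem_box k c d hi), eval_monomial_μt]
    ring

lemma μt_sub_single0 (u v : ℕ) (hu : 1 ≤ u) :
    μt u v - Finsupp.single (0 : Fin 2) 1 = μt (u-1) v := by
  ext j
  fin_cases j <;>
    simp [μt, Finsupp.tsub_apply, Finsupp.single_apply]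

lemma μt_sub_single1 (u v : ℕ) (hv : 1 ≤ v) :
    μt u v - Finsupp.single (1 : Fin 2) 1 = μt u (v-1) := by
  ext j
  fin_cases j <;>
    simp [μt, Finsupp.tsub_apply, Finsupp.single_apply]

lemma x_pderiv_eval (k c d : ℕ) (b : ℕ → ℕ → ℝ) (x₀ y₀ : ℝ) :
    x₀ * MvPolynomial.eval ![x₀, y₀] (MvPolynomial.pderiv (0 : Fin 2) (Bmv k c d b))
      = ∑ i ∈ box k c d, (i.1 : ℝ) * (b i.1 i.2 * x₀ ^ i.1 * y₀ ^ i.2) := by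
  rw [Bmv_eq_sum, map_sum, map_sum, Finset.sum_insert (not_mem_box k c d)]
  have h0 : MvPolynomial.eval ![x₀, y₀]
      (MvPolynomial.pderiv (0 : Fin 2) (MvPolynomial.monomial (μt 0 0)
        (if ((0,0) : ℕ×ℕ) = (0,0) then (1:ℝ) else b 0 0))) = 0 := by
    rw [MvPolynomial.pderiv_monomial]
    rw [μt_apply0]
    norm_num
  rw [h0, zero_add, Finset.mul_sum]
  refine Finset.sum_congr rfl fun i hi => ?_
  have hib : i ∈ box k c d := hi
  have hU : 1 ≤ i.1 ∧ i.1 ≤ k ∧ c ≤ i.2 ∧ i.2 ≤ d := by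
    simpa [box, Finset.mem_product, Finset.mem_Icc, and_assoc] using hib
  rw [if_neg (by rintro rfl; exact not_mem_box k c d hi)]
  rw [MvPolynomial.pderiv_monomial, μt_apply0, μt_sub_single0 _ _ hU.1, eval_monomial_μt]
  have : x₀ ^ i.1 = x₀ * x₀ ^ (i.1 - 1) := by
    rw [← pow_succ']
    congr 1
    omega
  rw [this]
  ring

lemma y_pderiv_eval (k c d : ℕ) (b : ℕ → ℕ → ℝ) (hc : 1 ≤ c) (x₀ y₀ : ℝ) :
    y₀ * MvPolynomial.eval ![x₀, y₀] (MvPolynomial.pderiv (1 : Fin 2) (Bmv k c d b))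
      = ∑ i ∈ box k c d, (i.2 : ℝ) * (b i.1 i.2 * x₀ ^ i.1 * y₀ ^ i.2) := by
  rw [Bmv_eq_sum, map_sum, map_sum, Finset.sum_insert (not_mem_box k c d)]
  have h0 : MvPolynomial.eval ![x₀, y₀]
      (MvPolynomial.pderiv (1 : Fin 2) (MvPolynomial.monomial (μt 0 0)
        (if ((0,0) : ℕ×ℕ) = (0,0) then (1:ℝ) else b 0 0))) = 0 := by
    rw [MvPolynomial.pderiv_monomial]
    rw [μt_apply1]
    norm_num
  rw [h0, zero_add, Finset.mul_sum]
  refine Finset.sum_congr rfl fun i hi => ?_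
  have hU : 1 ≤ i.1 ∧ i.1 ≤ k ∧ c ≤ i.2 ∧ i.2 ≤ d := by
    simpa [box, Finset.mem_product, Finset.mem_Icc, and_assoc] using hi
  have hv : 1 ≤ i.2 := le_trans hc hU.2.2.1
  rw [if_neg (by rintro rfl; exact not_mem_box k c d hi)]
  rw [MvPolynomial.pderiv_monomial, μt_apply1, μt_sub_single1 _ _ hv, eval_monomial_μt]
  have : y₀ ^ i.2 = y₀ * y₀ ^ (i.2 - 1) := by
    rw [← pow_succ']
    congr 1
    omega
  rw [this]
  ring



/-- entropy functional -/
noncomputable def ent (b : ℕ → ℕ → ℝ) (k c d : ℕ) (s : ℕ × ℕ → ℝ) : ℝ :=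
  -((1 - ∑ i ∈ box k c d, s i) * Real.log (1 - ∑ i ∈ box k c d, s i))
  - ∑ i ∈ box k c d, s i * Real.log (s i)
  + ∑ i ∈ box k c d, s i * Real.log (b i.1 i.2)

/-- tilted probabilities -/
noncomputable def tv (b : ℕ → ℕ → ℝ) (x₀ y₀ E : ℝ) : ℕ × ℕ → ℝ :=
  fun i => b i.1 i.2 * x₀ ^ i.1 * y₀ ^ i.2 / E

section saddle

variable (k c d : ℕ) (b : ℕ → ℕ → ℝ) (x₀ y₀ : ℝ)

lemma one_lt_E (hbnn : ∀ u v, 0 ≤ b u v)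
    (hbne : ∃ u ∈ Finset.Icc 1 k, ∃ v ∈ Finset.Icc c d, b u v ≠ 0)
    (hx₀ : 0 < x₀) (hy₀ : 0 < y₀) :
    1 < MvPolynomial.eval ![x₀, y₀] (Bmv k c d b) := by
  rw [eval_Bmv]
  have hpos : 0 < ∑ i ∈ box k c d, b i.1 i.2 * x₀ ^ i.1 * y₀ ^ i.2 := by
    obtain ⟨u, hu, v, hv, hb⟩ := hbne
    have hmem : ((u, v) : ℕ × ℕ) ∈ box k c d := by
      simp [box, Finset.mem_product, hu, hv]
    have hbuv : 0 < b u v := lt_of_le_of_ne (hbnn u v) (Ne.symm hb)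
    calc (0:ℝ) < b u v * x₀ ^ u * y₀ ^ v := by positivity
    _ ≤ _ := Finset.single_le_sum (f := fun i : ℕ × ℕ => b i.1 i.2 * x₀ ^ i.1 * y₀ ^ i.2)
        (fun i _ => by have := hbnn i.1 i.2; positivity) hmem
  linarith

variable (E : ℝ)

lemma sum_tv_eq (hE : E = MvPolynomial.eval ![x₀, y₀] (Bmv k c d b)) (hE1 : 1 < E) : ∑ i ∈ box k c d, tv b x₀ y₀ E i = 1 - 1 / E := by
  have h : ∑ i ∈ box k c d, b i.1 i.2 * x₀ ^ i.1 * y₀ ^ i.2 = E - 1 := by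
    rw [hE, eval_Bmv]; ring
  have hE0 : E ≠ 0 := by linarith
  simp only [tv]
  rw [← Finset.sum_div, h]
  field_simp

lemma sum_u_tv (hE : E = MvPolynomial.eval ![x₀, y₀] (Bmv k c d b)) (hE1 : 1 < E) (ξ : ℝ)
    (hsx : x₀ * MvPolynomial.eval ![x₀, y₀] (MvPolynomial.pderiv (0 : Fin 2) (Bmv k c d b))
        / MvPolynomial.eval ![x₀, y₀] (Bmv k c d b) = ξ) :
    ∑ i ∈ box k c d, (i.1 : ℝ) * tv b x₀ y₀ E i = ξ := by
  have hE0 : E ≠ 0 := by linarith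
  have h := x_pderiv_eval k c d b x₀ y₀
  rw [← hsx, ← hE, h, Finset.sum_div]
  refine Finset.sum_congr rfl fun i _ => ?_
  simp only [tv]; ring

lemma sum_v_tv (hE : E = MvPolynomial.eval ![x₀, y₀] (Bmv k c d b)) (hE1 : 1 < E) (hc : 1 ≤ c) (θ : ℝ)
    (hsy : y₀ * MvPolynomial.eval ![x₀, y₀] (MvPolynomial.pderiv (1 : Fin 2) (Bmv k c d b))
        / MvPolynomial.eval ![x₀, y₀] (Bmv k c d b) = θ) :
    ∑ i ∈ box k c d, (i.2 : ℝ) * tv b x₀ y₀ E i = θ := by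
  have hE0 : E ≠ 0 := by linarith
  have h := y_pderiv_eval k c d b hc x₀ y₀
  rw [← hsy, ← hE, h]
  rw [Finset.sum_div]
  refine Finset.sum_congr rfl fun i _ => ?_
  simp only [tv]; ring

lemma ent_tv (hE : E = MvPolynomial.eval ![x₀, y₀] (Bmv k c d b)) (hE1 : 1 < E) (hbnn : ∀ u v, 0 ≤ b u v) (hx₀ : 0 < x₀) (hy₀ : 0 < y₀) (hc : 1 ≤ c)
    (ξ θ : ℝ)
    (hsx : x₀ * MvPolynomial.eval ![x₀, y₀] (MvPolynomial.pderiv (0 : Fin 2) (Bmv k c d b))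
        / MvPolynomial.eval ![x₀, y₀] (Bmv k c d b) = ξ)
    (hsy : y₀ * MvPolynomial.eval ![x₀, y₀] (MvPolynomial.pderiv (1 : Fin 2) (Bmv k c d b))
        / MvPolynomial.eval ![x₀, y₀] (Bmv k c d b) = θ) :
    ent b k c d (tv b x₀ y₀ E) = Real.log E - ξ * Real.log x₀ - θ * Real.log y₀ := by
  have hE0 : (0:ℝ) < E := by linarith
  have hEne : E ≠ 0 := ne_of_gt hE0
  have hsum := sum_tv_eq k c d b x₀ y₀ E hE hE1
  have hsu := sum_u_tv k c d b x₀ y₀ E hE hE1 ξ hsx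
  have hsv := sum_v_tv k c d b x₀ y₀ E hE hE1 hc θ hsy
  rw [ent, hsum]
  have hu1 : (1 : ℝ) - (1 - 1 / E) = 1 / E := by ring
  rw [hu1]
  have hunit : -(1 / E * Real.log (1 / E)) = 1 / E * Real.log E := by
    rw [one_div, Real.log_inv]; ring
  rw [hunit]
  have hkey : ∑ i ∈ box k c d, tv b x₀ y₀ E i * Real.log (b i.1 i.2)
      - ∑ i ∈ box k c d, tv b x₀ y₀ E i * Real.log (tv b x₀ y₀ E i)
      = ∑ i ∈ box k c d, tv b x₀ y₀ E i *
          (Real.log E - (i.1 : ℝ) * Real.log x₀ - (i.2 : ℝ) * Real.log y₀) := by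
    rw [← Finset.sum_sub_distrib]
    refine Finset.sum_congr rfl fun i _ => ?_
    by_cases hb : b i.1 i.2 = 0
    · simp [tv, hb]
    · have hbpos : 0 < b i.1 i.2 := lt_of_le_of_ne (hbnn i.1 i.2) (Ne.symm hb)
      have htvpos : 0 < tv b x₀ y₀ E i := by
        rw [tv]; positivity
      have hlog : Real.log (tv b x₀ y₀ E i)
          = Real.log (b i.1 i.2) + (i.1 : ℝ) * Real.log x₀ + (i.2 : ℝ) * Real.log y₀
            - Real.log E := by
        rw [tv, Real.log_div (by positivity) hEne, Real.log_mul (by positivity) (by positivity),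
          Real.log_mul (by positivity) (by positivity), Real.log_pow, Real.log_pow]
        try push_cast
        try ring
      rw [hlog]; ring
  have hexp : ∑ i ∈ box k c d, tv b x₀ y₀ E i *
      (Real.log E - (i.1 : ℝ) * Real.log x₀ - (i.2 : ℝ) * Real.log y₀)
      = (1 - 1/E) * Real.log E - ξ * Real.log x₀ - θ * Real.log y₀ := by
    have : ∀ i : ℕ × ℕ, tv b x₀ y₀ E i *
        (Real.log E - (i.1 : ℝ) * Real.log x₀ - (i.2 : ℝ) * Real.log y₀)
        = tv b x₀ y₀ E i * Real.log E - ((i.1:ℝ) * tv b x₀ y₀ E i) * Real.log x₀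
          - ((i.2:ℝ) * tv b x₀ y₀ E i) * Real.log y₀ := fun i => by ring
    simp_rw [this]
    rw [Finset.sum_sub_distrib, Finset.sum_sub_distrib, ← Finset.sum_mul, ← Finset.sum_mul,
      ← Finset.sum_mul, hsum, hsu, hsv]
  linarith [hkey, hexp]

end saddle


/-! ### Stirling-type bounds -/

noncomputable def Cst : ℝ := 2 + Real.log (Stirling.stirlingSeq 1)

lemma sqrt_pi_ge_one : (1:ℝ) ≤ Real.sqrt π := by
  rw [show (1:ℝ) = Real.sqrt 1 by simp]
  exact Real.sqrt_le_sqrt (by linarith [Real.pi_gt_three])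

lemma stirlingSeq_ge (n : ℕ) (hn : 1 ≤ n) : Real.sqrt π ≤ Stirling.stirlingSeq n := by
  have ht : Filter.Tendsto (Stirling.stirlingSeq ∘ Nat.succ) Filter.atTop (𝓝 (Real.sqrt π)) := by
    exact Stirling.tendsto_stirlingSeq_sqrt_pi.comp (Filter.tendsto_add_atTop_nat 1)
  have := Stirling.stirlingSeq'_antitone.le_of_tendsto ht (n - 1)
  simpa [Function.comp, Nat.succ_eq_add_one, Nat.sub_add_cancel hn] using this

lemma stirlingSeq_le (n : ℕ) (hn : 1 ≤ n) : Stirling.stirlingSeq n ≤ Stirling.stirlingSeq 1 := by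
  have := Stirling.stirlingSeq'_antitone (Nat.zero_le (n - 1))
  simpa [Function.comp, Nat.succ_eq_add_one, Nat.sub_add_cancel hn] using this

lemma two_le_exp_one : (2:ℝ) ≤ Real.exp 1 := by
  linarith [Real.add_one_le_exp 1]

lemma sqrt_two_le_two : Real.sqrt 2 ≤ 2 := by
  nlinarith [Real.sq_sqrt (show (0:ℝ) ≤ 2 by norm_num), Real.sqrt_nonneg 2]

lemma Cst_nonneg : 0 ≤ Cst := by
  have hsq : (0:ℝ) < Real.sqrt 2 := Real.sqrt_pos.2 (by norm_num)
  have hs : (1:ℝ) ≤ Stirling.stirlingSeq 1 := by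
    have h1 : Stirling.stirlingSeq 1 = Real.exp 1 / Real.sqrt 2 := by
      rw [Stirling.stirlingSeq]
      rw [Nat.factorial_one]
      push_cast
      rw [pow_one, mul_one]
      rw [eq_div_iff (by positivity)]
      field_simp
      try ring
    rw [h1, le_div_iff₀ hsq, one_mul]
    linarith [two_le_exp_one, sqrt_two_le_two]
  have : 0 ≤ Real.log (Stirling.stirlingSeq 1) := Real.log_nonneg hs
  rw [Cst]; linarith

lemma factorial_eq_stirling (n : ℕ) (hn : 1 ≤ n) :
    ((Nat.factorial n : ℕ) : ℝ) = Stirling.stirlingSeq n * (Real.sqrt (2 * n) * ((n : ℝ) / Real.exp 1) ^ n) := by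
  rw [Stirling.stirlingSeq]
  have h1 : (0:ℝ) < Real.sqrt (2 * n) := Real.sqrt_pos.2 (by positivity)
  have h2 : (0:ℝ) < ((n:ℝ) / Real.exp 1) ^ n := by
    have : (0:ℝ) < (n:ℝ) := by exact_mod_cast hn
    positivity
  field_simp

lemma log_factorial_ge (n : ℕ) : (n:ℝ) * Real.log n - n ≤ Real.log (Nat.factorial n) := by
  rcases Nat.eq_zero_or_pos n with h | h
  · subst h; simp
  · have hn : 1 ≤ n := h
    have hnp : (0:ℝ) < n := by exact_mod_cast h
    have hpow : ((n:ℝ) / Real.exp 1) ^ n ≤ ((Nat.factorial n : ℕ) : ℝ) := by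
      rw [factorial_eq_stirling n hn]
      have h1 : (1:ℝ) ≤ Real.sqrt (2 * n) := by
        rw [show (1:ℝ) = Real.sqrt 1 by simp]
        refine Real.sqrt_le_sqrt ?_
        have : (1:ℝ) ≤ (n:ℝ) := by exact_mod_cast hn
        linarith
      have h2 : (1:ℝ) ≤ Stirling.stirlingSeq n := le_trans sqrt_pi_ge_one (stirlingSeq_ge n hn)
      have h3 : (0:ℝ) < ((n:ℝ) / Real.exp 1) ^ n := by positivity
      nlinarith [mul_le_mul_of_nonneg_right (one_le_mul_of_one_le_of_one_le h2 h1) h3.le]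
    have hlhs : (n:ℝ) * Real.log n - n = Real.log (((n:ℝ) / Real.exp 1) ^ n) := by
      rw [Real.log_pow, Real.log_div (ne_of_gt hnp) (ne_of_gt (Real.exp_pos 1)), Real.log_exp]
      ring
    rw [hlhs]
    apply Real.log_le_log (by positivity) hpow

lemma log_factorial_le (n : ℕ) (hn : 1 ≤ n) :
    Real.log (Nat.factorial n) ≤ (n:ℝ) * Real.log n - n + (Cst + Real.log n) := by
  have hnp : (0:ℝ) < n := by exact_mod_cast hn
  have h1 : (0:ℝ) < Real.sqrt (2 * n) := Real.sqrt_pos.2 (by positivity)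
  have h2 : (0:ℝ) < ((n:ℝ) / Real.exp 1) ^ n := by positivity
  have hspos : 0 < Stirling.stirlingSeq n := lt_of_lt_of_le (Real.sqrt_pos.2 Real.pi_pos) (stirlingSeq_ge n hn)
  rw [factorial_eq_stirling n hn, Real.log_mul (ne_of_gt hspos) (by positivity),
    Real.log_mul (ne_of_gt h1) (ne_of_gt h2), Real.log_pow,
    Real.log_div (ne_of_gt hnp) (ne_of_gt (Real.exp_pos 1)), Real.log_exp]
  have e1 : Real.log (Stirling.stirlingSeq n) ≤ Real.log (Stirling.stirlingSeq 1) :=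
    Real.log_le_log hspos (stirlingSeq_le n hn)
  have e2 : Real.log (Real.sqrt (2 * n)) ≤ 1 + Real.log n := by
    rw [Real.log_sqrt (by positivity), Real.log_mul (by norm_num) (ne_of_gt hnp)]
    have l2 : Real.log 2 ≤ 1 := by
      rw [show (1:ℝ) = Real.log (Real.exp 1) by rw [Real.log_exp]]
      apply Real.log_le_log (by norm_num)
      linarith [Real.add_one_le_exp 1]
    have ln : 0 ≤ Real.log n := Real.log_nonneg (by exact_mod_cast hn)
    linarith
  rw [Cst]
  nlinarith [Real.log_nonneg (show (1:ℝ) ≤ n by exact_mod_cast hn)]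

lemma log_multinomial_ge (I : Finset (ℕ × ℕ)) (κ : ℕ × ℕ → ℕ) (n : ℕ) (hn : 1 ≤ n)
    (hsum : ∑ i ∈ I, κ i = n) :
    (n:ℝ) * Real.log n - n - (∑ i ∈ I, ((κ i : ℝ) * Real.log (κ i) - κ i))
      - (I.card : ℝ) * (Cst + Real.log n)
      ≤ Real.log (Nat.multinomial I κ) := by
  have hlogn : 0 ≤ Real.log n := Real.log_nonneg (by exact_mod_cast hn)
  have hspec := Nat.multinomial_spec I κ
  have hprodpos : 0 < ∏ i ∈ I, Nat.factorial (κ i) := Finset.prod_pos fun i _ => Nat.factorial_pos _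
  have hmultpos : 0 < Nat.multinomial I κ := Nat.multinomial_pos I κ
  have hcast : (Nat.multinomial I κ : ℝ) = ((Nat.factorial n : ℕ) : ℝ) / ∏ i ∈ I, (Nat.factorial (κ i) : ℝ) := by
    rw [eq_div_iff (by positivity)]
    rw [← Nat.cast_prod, ← Nat.cast_mul, mul_comm]
    rw [hspec, hsum]
  have hlogmul : Real.log (Nat.multinomial I κ)
      = Real.log (Nat.factorial n) - ∑ i ∈ I, Real.log (Nat.factorial (κ i)) := by
    rw [hcast, Real.log_div (by positivity) (by positivity)]
    congr 1
    rw [Real.log_prod]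
    intro i _
    exact_mod_cast (Nat.factorial_pos (κ i)).ne'
  rw [hlogmul]
  have hterm : ∀ i ∈ I, Real.log (Nat.factorial (κ i)) ≤ ((κ i : ℝ) * Real.log (κ i) - κ i) + (Cst + Real.log n) := by
    intro i hi
    rcases Nat.eq_zero_or_pos (κ i) with h | h
    · rw [h]
      simp only [Nat.factorial_zero, Nat.cast_zero, Nat.cast_one, Real.log_one, zero_mul, sub_zero]
      have := Cst_nonneg
      norm_num
      linarith
    · have hle : κ i ≤ n := by
        rw [← hsum]
        exact Finset.single_le_sum (fun j _ => Nat.zero_le (κ j)) hi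
      have := log_factorial_le (κ i) h
      have hlogle : Real.log (κ i) ≤ Real.log n := by
        apply Real.log_le_log (by exact_mod_cast h)
        exact_mod_cast hle
      linarith
  have hsumle := Finset.sum_le_sum hterm
  rw [Finset.sum_add_distrib, Finset.sum_const, nsmul_eq_mul] at hsumle
  have hfge := log_factorial_ge n
  linarith


/-! ### coefficient lower bound via the multinomial theorem -/

lemma prod_monomial {α : Type*} [DecidableEq α] (s : Finset α) (σf : α → (Fin 2 →₀ ℕ)) (af : α → ℝ) :
    ∏ i ∈ s, MvPolynomial.monomial (σf i) (af i)
      = MvPolynomial.monomial (∑ i ∈ s, σf i) (∏ i ∈ s, af i) := by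
  induction s using Finset.cons_induction with
  | empty => simp
  | cons a s ha ih =>
      rw [Finset.prod_cons, Finset.sum_cons, Finset.prod_cons, ih, MvPolynomial.monomial_mul]

lemma μt_zero : μt 0 0 = 0 := by
  simp [μt]

lemma μt_smul (m u v : ℕ) : m • μt u v = μt (m * u) (m * v) := by
  rw [μt, μt, smul_add, Finsupp.smul_single, Finsupp.smul_single, smul_eq_mul, smul_eq_mul]

lemma sum_smul_μt (s : Finset (ℕ × ℕ)) (w : ℕ × ℕ → ℕ) :
    ∑ i ∈ s, w i • μt i.1 i.2 = μt (∑ i ∈ s, w i * i.1) (∑ i ∈ s, w i * i.2) := by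
  induction s using Finset.cons_induction with
  | empty => simp [← μt_zero]
  | cons a s ha ih =>
      rw [Finset.sum_cons, Finset.sum_cons, Finset.sum_cons, ih, μt_smul, μt_add]

lemma coeff_pow_ge_term (k c d : ℕ) (b : ℕ → ℕ → ℝ) (hbnn : ∀ u v, 0 ≤ b u v)
    (n : ℕ) (w : ℕ × ℕ → ℕ) (κ₀ : ℕ)
    (hsupp : ∀ i, w i ≠ 0 → i ∈ box k c d)
    (hsum : κ₀ + ∑ i ∈ box k c d, w i = n) :
    (Nat.multinomial (insert (0,0) (box k c d)) (fun i => if i = (0,0) then κ₀ else w i) : ℝ)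
        * ∏ i ∈ box k c d, (b i.1 i.2) ^ (w i)
      ≤ MvPolynomial.coeff (μt (∑ i ∈ box k c d, w i * i.1) (∑ i ∈ box k c d, w i * i.2))
          (Bmv k c d b ^ n) := by
  classical
  set I := insert (0,0) (box k c d) with hI
  set κ : ℕ × ℕ → ℕ := fun i => if i = (0,0) then κ₀ else w i with hκ
  set μ := μt (∑ i ∈ box k c d, w i * i.1) (∑ i ∈ box k c d, w i * i.2) with hμ
  rw [Bmv_eq_sum, Finset.sum_pow_eq_sum_piAntidiag, MvPolynomial.coeff_sum]
  have hterm : ∀ κ' : ℕ × ℕ → ℕ,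
      MvPolynomial.coeff μ ((Nat.multinomial I κ' : MvPolynomial (Fin 2) ℝ) *
        ∏ i ∈ I, (MvPolynomial.monomial (μt i.1 i.2) (if i = (0,0) then (1:ℝ) else b i.1 i.2)) ^ κ' i)
      = (Nat.multinomial I κ' : ℝ) *
        (if (∑ i ∈ I, κ' i • μt i.1 i.2) = μ then
          ∏ i ∈ I, (if i = (0,0) then (1:ℝ) else b i.1 i.2) ^ κ' i else 0) := by
    intro κ'
    have hc : ((Nat.multinomial I κ' : ℕ) : MvPolynomial (Fin 2) ℝ)
        = MvPolynomial.C ((Nat.multinomial I κ' : ℕ) : ℝ) := by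
      simp
    rw [hc, MvPolynomial.coeff_C_mul]
    congr 1
    have hprod : ∏ i ∈ I, (MvPolynomial.monomial (μt i.1 i.2)
          (if i = (0,0) then (1:ℝ) else b i.1 i.2)) ^ κ' i
        = MvPolynomial.monomial (∑ i ∈ I, κ' i • μt i.1 i.2)
            (∏ i ∈ I, (if i = (0,0) then (1:ℝ) else b i.1 i.2) ^ κ' i) := by
      rw [← prod_monomial I (fun i => κ' i • μt i.1 i.2)
        (fun i => (if i = (0,0) then (1:ℝ) else b i.1 i.2) ^ κ' i)]
      refine Finset.prod_congr rfl fun i _ => ?_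
      rw [MvPolynomial.monomial_pow]
    rw [hprod, MvPolynomial.coeff_monomial]
  simp only [← hI, hterm]
  have hnn : ∀ κ' ∈ (I.piAntidiag n), (0:ℝ) ≤ (Nat.multinomial I κ' : ℝ) *
      (if (∑ i ∈ I, κ' i • μt i.1 i.2) = μ then
        ∏ i ∈ I, (if i = (0,0) then (1:ℝ) else b i.1 i.2) ^ κ' i else 0) := by
    intro κ' _
    apply mul_nonneg (Nat.cast_nonneg _)
    split_ifs with h
    · refine Finset.prod_nonneg fun i _ => pow_nonneg ?_ _
      split_ifs
      · exact zero_le_one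
      · exact hbnn _ _
    · exact le_refl (0:ℝ)
  have hmem : κ ∈ I.piAntidiag n := by
    rw [Finset.mem_piAntidiag]
    constructor
    · rw [hI, Finset.sum_insert (not_mem_box k c d)]
      have : ∑ i ∈ box k c d, κ i = ∑ i ∈ box k c d, w i :=
        Finset.sum_congr rfl fun i hi => by
          rw [hκ]
          exact if_neg (by rintro rfl; exact not_mem_box k c d hi)
      rw [this]
      simpa using hsum
    · intro i hi
      rw [hκ] at hi
      by_cases h : i = (0,0)
      · rw [hI, h]; exact Finset.mem_insert_self _ _
      · simp only [if_neg h] at hi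
        exact Finset.mem_insert_of_mem (hsupp i hi)
  have hexp : (∑ i ∈ I, κ i • μt i.1 i.2) = μ := by
    rw [hI, Finset.sum_insert (not_mem_box k c d)]
    have h1 : κ (0,0) • μt 0 0 = 0 := by rw [μt_zero, smul_zero]
    have h2 : ∑ i ∈ box k c d, κ i • μt i.1 i.2 = ∑ i ∈ box k c d, w i • μt i.1 i.2 :=
      Finset.sum_congr rfl fun i hi => by
        have : i ≠ (0,0) := by rintro rfl; exact not_mem_box k c d hi
        simp only [κ, if_neg this]
    rw [h1, zero_add, h2, sum_smul_μt, hμ]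
  have hval : (Nat.multinomial I κ : ℝ) *
      (if (∑ i ∈ I, κ i • μt i.1 i.2) = μ then
        ∏ i ∈ I, (if i = (0,0) then (1:ℝ) else b i.1 i.2) ^ κ i else 0)
      = (Nat.multinomial I κ : ℝ) * ∏ i ∈ box k c d, (b i.1 i.2) ^ (w i) := by
    rw [if_pos hexp]
    congr 1
    rw [hI, Finset.prod_insert (not_mem_box k c d), if_pos rfl, one_pow, one_mul]
    refine Finset.prod_congr rfl fun i hi => ?_
    have hne : i ≠ (0,0) := by rintro rfl; exact not_mem_box k c d hi
    rw [if_neg hne, hκ]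
    simp only [if_neg hne]
  calc (Nat.multinomial I κ : ℝ) * ∏ i ∈ box k c d, (b i.1 i.2) ^ (w i)
      = _ := hval.symm
    _ ≤ _ := Finset.single_le_sum hnn hmem


/-! ### per-level lower bound -/

lemma level_lower_bound (k c d : ℕ) (b : ℕ → ℕ → ℝ) (hbnn : ∀ u v, 0 ≤ b u v)
    (M q' : ℕ) (hM : 0 < M) (hq' : 0 < q') (w : ℕ × ℕ → ℕ)
    (hsupp : ∀ i, w i ≠ 0 → i ∈ box k c d)
    (hbw : ∀ i, w i ≠ 0 → b i.1 i.2 ≠ 0)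
    (hwle : ∑ i ∈ box k c d, w i ≤ q' * M)
    (j : ℕ) (hj : 1 ≤ j) :
    0 < MvPolynomial.coeff (μt (∑ i ∈ box k c d, (j * w i) * i.1) (∑ i ∈ box k c d, (j * w i) * i.2))
          (Bmv k c d b ^ (q' * (M * j))) ∧
    ((q' * (M * j) : ℕ) : ℝ) * ent b k c d (fun i => (w i : ℝ) / ((q':ℝ) * M))
        - (((box k c d).card : ℝ) + 1) * (Cst + Real.log ((q' * (M * j) : ℕ) : ℝ))
      ≤ Real.log (MvPolynomial.coeff
          (μt (∑ i ∈ box k c d, (j * w i) * i.1) (∑ i ∈ box k c d, (j * w i) * i.2))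
          (Bmv k c d b ^ (q' * (M * j)))) := by
  classical
  set n : ℕ := q' * (M * j) with hn
  have hn1 : 1 ≤ n := Nat.mul_pos hq' (Nat.mul_pos hM hj)
  have hnR : (0:ℝ) < (n:ℝ) := by exact_mod_cast hn1
  set W : ℕ := ∑ i ∈ box k c d, w i with hW
  have hjW : j * W ≤ n := by
    calc j * W ≤ j * (q' * M) := Nat.mul_le_mul_left j hwle
    _ = n := by rw [hn]; ring
  set κ₀ : ℕ := n - j * W with hκ₀
  have hsum' : κ₀ + ∑ i ∈ box k c d, (j * w i) = n := by
    rw [hκ₀, ← Finset.mul_sum, ← hW]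
    omega
  have hsupp' : ∀ i, j * w i ≠ 0 → i ∈ box k c d := by
    intro i hi
    exact hsupp i (by intro h; exact hi (by rw [h, mul_zero]))
  have hkey := coeff_pow_ge_term k c d b hbnn n (fun i => j * w i) κ₀ hsupp' hsum'
  set I := insert (0,0) (box k c d) with hI
  set κf : ℕ × ℕ → ℕ := fun i => if i = (0,0) then κ₀ else j * w i with hκf
  set T : ℝ := (Nat.multinomial I κf : ℝ) * ∏ i ∈ box k c d, (b i.1 i.2) ^ (j * w i) with hT
  have hTpos : 0 < T := by
    rw [hT]
    apply mul_pos
    · exact_mod_cast Nat.multinomial_pos I κf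
    · refine Finset.prod_pos fun i _ => ?_
      rcases Nat.eq_zero_or_pos (w i) with h | h
      · rw [h, mul_zero, pow_zero]; norm_num
      · have hb : b i.1 i.2 ≠ 0 := hbw i (by omega)
        have : 0 < b i.1 i.2 := lt_of_le_of_ne (hbnn _ _) (Ne.symm hb)
        positivity
  have hcoeffpos : 0 < MvPolynomial.coeff
      (μt (∑ i ∈ box k c d, (j * w i) * i.1) (∑ i ∈ box k c d, (j * w i) * i.2))
      (Bmv k c d b ^ n) := lt_of_lt_of_le hTpos hkey
  refine ⟨hcoeffpos, ?_⟩
  have hlogmono := Real.log_le_log hTpos hkey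
  -- compute log T
  have hprodpos : (0:ℝ) < ∏ i ∈ box k c d, (b i.1 i.2) ^ (j * w i) := by
    refine Finset.prod_pos fun i _ => ?_
    rcases Nat.eq_zero_or_pos (w i) with h | h
    · rw [h, mul_zero, pow_zero]; norm_num
    · have hb : b i.1 i.2 ≠ 0 := hbw i (by omega)
      have : 0 < b i.1 i.2 := lt_of_le_of_ne (hbnn _ _) (Ne.symm hb)
      positivity
  have hlogT : Real.log T = Real.log (Nat.multinomial I κf)
      + ∑ i ∈ box k c d, ((j * w i : ℕ) : ℝ) * Real.log (b i.1 i.2) := by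
    rw [hT, Real.log_mul (by exact_mod_cast (Nat.multinomial_pos I κf).ne') (ne_of_gt hprodpos)]
    congr 1
    rw [Real.log_prod]
    · exact Finset.sum_congr rfl fun i hi => by rw [Real.log_pow]
    · intro i hi
      rcases Nat.eq_zero_or_pos (w i) with h | h
      · rw [h, mul_zero, pow_zero]; norm_num
      · have hb : b i.1 i.2 ≠ 0 := hbw i (by omega)
        have : 0 < b i.1 i.2 := lt_of_le_of_ne (hbnn _ _) (Ne.symm hb)
        positivity
  have hκsum : ∑ i ∈ I, κf i = n := by
    rw [hI, Finset.sum_insert (not_mem_box k c d)]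
    have : ∑ i ∈ box k c d, κf i = ∑ i ∈ box k c d, j * w i :=
      Finset.sum_congr rfl fun i hi => by
        have : i ≠ (0,0) := by rintro rfl; exact not_mem_box k c d hi
        simp only [κf, if_neg this]
    rw [this]
    simpa [κf] using hsum'
  have hmult := log_multinomial_ge I κf n hn1 hκsum
  -- entropy identity
  have hident : (n:ℝ) * Real.log n - n - (∑ i ∈ I, ((κf i : ℝ) * Real.log (κf i) - κf i))
      = -(n:ℝ) * ∑ i ∈ I, ((κf i : ℝ)/(n:ℝ)) * Real.log ((κf i : ℝ)/(n:ℝ)) := by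
    have hterm : ∀ i ∈ I, ((κf i : ℝ) * Real.log (κf i) - κf i)
        = (n:ℝ) * (((κf i : ℝ)/(n:ℝ)) * Real.log ((κf i : ℝ)/(n:ℝ)))
          + (κf i : ℝ) * Real.log n - κf i := by
      intro i _
      rcases Nat.eq_zero_or_pos (κf i) with h | h
      · rw [h]; simp
      · have hκpos : (0:ℝ) < (κf i : ℝ) := by exact_mod_cast h
        rw [Real.log_div (ne_of_gt hκpos) (ne_of_gt hnR)]
        field_simp
        try ring
    rw [Finset.sum_congr rfl hterm, Finset.sum_sub_distrib, Finset.sum_add_distrib,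
      ← Finset.mul_sum, ← Finset.sum_mul, ← Nat.cast_sum, hκsum]
    ring
  -- identify the entropy sum with `ent`
  have hents : ∑ i ∈ I, ((κf i : ℝ)/(n:ℝ)) * Real.log ((κf i : ℝ)/(n:ℝ))
      = (1 - ∑ i ∈ box k c d, (w i : ℝ)/((q':ℝ)*M)) *
          Real.log (1 - ∑ i ∈ box k c d, (w i : ℝ)/((q':ℝ)*M))
        + ∑ i ∈ box k c d, ((w i : ℝ)/((q':ℝ)*M)) * Real.log ((w i : ℝ)/((q':ℝ)*M)) := by
    have hqM : (0:ℝ) < (q':ℝ) * M := by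
      have h1 : (0:ℝ) < (q':ℝ) := by exact_mod_cast hq'
      have h2 : (0:ℝ) < (M:ℝ) := by exact_mod_cast hM
      positivity
    have hjR : (0:ℝ) < (j:ℝ) := by exact_mod_cast hj
    rw [hI, Finset.sum_insert (not_mem_box k c d)]
    congr 1
    · -- unit term
      have h0 : ((κf (0,0) : ℝ))/(n:ℝ) = 1 - ∑ i ∈ box k c d, (w i : ℝ)/((q':ℝ)*M) := by
        simp only [κf, if_pos rfl]
        rw [hκ₀]
        have hc : ((n - j * W : ℕ) : ℝ) = (n:ℝ) - (j:ℝ) * W := by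
          rw [Nat.cast_sub hjW]; push_cast; ring
        rw [hc, ← Finset.sum_div]
        have hWc : ∑ i ∈ box k c d, ((w i : ℕ) : ℝ) = (W:ℝ) := by
          rw [hW, Nat.cast_sum]
        rw [hWc]
        have hnr : (n:ℝ) = (q':ℝ) * M * j := by rw [hn]; push_cast; ring
        rw [hnr]
        have hqM' : ((q':ℝ) * M) ≠ 0 := ne_of_gt hqM
        field_simp
        try ring
      rw [h0]
    · refine Finset.sum_congr rfl fun i hi => ?_
      have hne : i ≠ (0,0) := by rintro rfl; exact not_mem_box k c d hi
      have h1 : ((κf i : ℝ))/(n:ℝ) = (w i : ℝ)/((q':ℝ)*M) := by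
        simp only [κf, if_neg hne]
        have hnr : (n:ℝ) = (q':ℝ) * M * j := by rw [hn]; push_cast; ring
        rw [hnr]
        push_cast
        rw [div_eq_div_iff (by positivity) (by positivity)]
        ring
      rw [h1]
  -- the b-weighted sum
  have hbsum : ∑ i ∈ box k c d, ((j * w i : ℕ) : ℝ) * Real.log (b i.1 i.2)
      = (n:ℝ) * ∑ i ∈ box k c d, ((w i : ℝ)/((q':ℝ)*M)) * Real.log (b i.1 i.2) := by
    rw [Finset.mul_sum]
    refine Finset.sum_congr rfl fun i hi => ?_
    have hqM : ((q':ℝ) * M) ≠ 0 := by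
      have h1 : (0:ℝ) < (q':ℝ) := by exact_mod_cast hq'
      have h2 : (0:ℝ) < (M:ℝ) := by exact_mod_cast hM
      positivity
    have hnr : (n:ℝ) = (q':ℝ) * M * j := by rw [hn]; push_cast; ring
    rw [hnr]
    push_cast
    field_simp
    try ring
  rw [hlogT, hbsum] at hlogmono
  rw [ent]
  have hIcard : (I.card : ℝ) = ((box k c d).card : ℝ) + 1 := by
    rw [hI, Finset.card_insert_of_notMem (not_mem_box k c d)]
    push_cast
    ring
  rw [hIcard] at hmult
  calc ((n : ℕ) : ℝ) *
        (-((1 - ∑ i ∈ box k c d, (w i : ℝ)/((q':ℝ)*M)) *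
            Real.log (1 - ∑ i ∈ box k c d, (w i : ℝ)/((q':ℝ)*M)))
          - ∑ i ∈ box k c d, ((w i : ℝ)/((q':ℝ)*M)) * Real.log ((w i : ℝ)/((q':ℝ)*M))
          + ∑ i ∈ box k c d, ((w i : ℝ)/((q':ℝ)*M)) * Real.log (b i.1 i.2))
        - (((box k c d).card : ℝ) + 1) * (Cst + Real.log ((n : ℕ) : ℝ))
      = ((n:ℝ) * Real.log n - n - (∑ i ∈ I, ((κf i : ℝ) * Real.log (κf i) - κf i))
          - (((box k c d).card : ℝ) + 1) * (Cst + Real.log (n:ℝ)))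
        + (n:ℝ) * ∑ i ∈ box k c d, ((w i : ℝ)/((q':ℝ)*M)) * Real.log (b i.1 i.2) := by
        rw [hident, hents]
        ring
    _ ≤ Real.log (Nat.multinomial I κf)
        + (n:ℝ) * ∑ i ∈ box k c d, ((w i : ℝ)/((q':ℝ)*M)) * Real.log (b i.1 i.2) := by
        linarith [hmult]
    _ ≤ _ := hlogmono


/-! ### from a rational solution to integer counts -/

lemma rat_mul_dvd_den_int (q : ℚ) (D : ℕ) (hD : (q.den : ℕ) ∣ D) (hq : 0 ≤ q) :
    ∃ w : ℕ, (w : ℚ) = q * D := by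
  obtain ⟨e, he⟩ := hD
  refine ⟨(q.num.toNat) * e, ?_⟩
  have hnum : (0:ℤ) ≤ q.num := Rat.num_nonneg.2 hq
  have h1 : ((q.num.toNat : ℕ) : ℚ) = (q.num : ℚ) := by
    rw [← Int.cast_natCast]
    rw [Int.toNat_of_nonneg hnum]
  push_cast
  rw [h1, he]
  push_cast
  have hden : ((q.den : ℚ)) ≠ 0 := by
    exact_mod_cast q.den_nz
  calc (q.num : ℚ) * e = ((q.num : ℚ) / q.den) * q.den * e := by field_simp
  _ = q * (q.den * e) := by rw [Rat.num_div_den]; ring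

lemma rat_to_counts (k c d q' p₁ p₂ : ℕ) (hq' : 0 < q') (b : ℕ → ℕ → ℝ) (s : ℕ × ℕ → ℚ)
    (h1 : ∀ i, 0 ≤ s i)
    (h2 : ∀ i, s i ≠ 0 → i ∈ box k c d ∧ b i.1 i.2 ≠ 0)
    (h3 : ∑ i ∈ box k c d, s i < 1)
    (h4 : ∑ i ∈ box k c d, s i * i.1 = (p₁ : ℚ) / q')
    (h5 : ∑ i ∈ box k c d, s i * i.2 = (p₂ : ℚ) / q') :
    ∃ M : ℕ, 0 < M ∧ ∃ w : ℕ × ℕ → ℕ,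
      (∀ i, w i ≠ 0 → i ∈ box k c d) ∧
      (∀ i, w i ≠ 0 → b i.1 i.2 ≠ 0) ∧
      (∑ i ∈ box k c d, w i ≤ q' * M) ∧
      (∑ i ∈ box k c d, w i * i.1 = p₁ * M) ∧
      (∑ i ∈ box k c d, w i * i.2 = p₂ * M) ∧
      (∀ i, ((w i : ℝ) / ((q':ℝ) * M)) = ((s i : ℚ) : ℝ)) := by
  classical
  set D : ℕ := ∏ i ∈ box k c d, (s i).den with hD
  have hDpos : 0 < D := Finset.prod_pos fun i _ => (s i).pos
  have hdvd : ∀ i, ((s i).den : ℕ) ∣ q' * D := by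
    intro i
    by_cases hi : s i = 0
    · rw [hi]; simp
    · exact Dvd.dvd.mul_left (Finset.dvd_prod_of_mem _ ((h2 i hi).1)) q'
  have hwex : ∀ i, ∃ w : ℕ, (w : ℚ) = s i * (q' * D) := by
    intro i
    obtain ⟨w, hw⟩ := rat_mul_dvd_den_int (s i) (q' * D) (hdvd i) (h1 i)
    exact ⟨w, by rw [hw]; push_cast; ring⟩
  choose w hw using hwex
  have hqD : (0:ℚ) < (q' : ℚ) * D := by
    have h1 : (0:ℚ) < (q':ℚ) := by exact_mod_cast hq'
    have h2 : (0:ℚ) < (D:ℚ) := by exact_mod_cast hDpos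
    positivity
  refine ⟨D, hDpos, w, ?_, ?_, ?_, ?_, ?_, ?_⟩
  · intro i hi
    refine (h2 i fun h => ?_).1
    apply hi
    have := hw i
    rw [h, zero_mul] at this
    exact_mod_cast this
  · intro i hi
    refine (h2 i fun h => ?_).2
    apply hi
    have := hw i
    rw [h, zero_mul] at this
    exact_mod_cast this
  · have : ((∑ i ∈ box k c d, w i : ℕ) : ℚ) ≤ ((q' * D : ℕ) : ℚ) := by
      push_cast
      rw [Finset.sum_congr rfl fun i _ => hw i, ← Finset.sum_mul]
      calc (∑ i ∈ box k c d, s i) * ((q':ℚ) * D) ≤ 1 * ((q':ℚ) * D) := by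
            apply mul_le_mul_of_nonneg_right (le_of_lt h3) (le_of_lt hqD)
      _ = (q':ℚ) * D := one_mul _
    exact_mod_cast this
  · have : ((∑ i ∈ box k c d, w i * i.1 : ℕ) : ℚ) = ((p₁ * D : ℕ) : ℚ) := by
      push_cast
      rw [Finset.sum_congr rfl fun i (_ : i ∈ box k c d) => by rw [hw i]]
      have hq0 : ((q':ℚ)) ≠ 0 := by positivity
      calc ∑ i ∈ box k c d, s i * ((q':ℚ) * D) * i.1
          = (∑ i ∈ box k c d, s i * i.1) * ((q':ℚ) * D) := by
            rw [Finset.sum_mul]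
            exact Finset.sum_congr rfl fun i _ => by ring
        _ = (p₁ : ℚ) * D := by rw [h4]; field_simp
    exact_mod_cast this
  · have : ((∑ i ∈ box k c d, w i * i.2 : ℕ) : ℚ) = ((p₂ * D : ℕ) : ℚ) := by
      push_cast
      rw [Finset.sum_congr rfl fun i (_ : i ∈ box k c d) => by rw [hw i]]
      have hq0 : ((q':ℚ)) ≠ 0 := by positivity
      calc ∑ i ∈ box k c d, s i * ((q':ℚ) * D) * i.2
          = (∑ i ∈ box k c d, s i * i.2) * ((q':ℚ) * D) := by
            rw [Finset.sum_mul]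
            exact Finset.sum_congr rfl fun i _ => by ring
        _ = (p₂ : ℚ) * D := by rw [h5]; field_simp
    exact_mod_cast this
  · intro i
    have hwR : ((w i : ℝ)) = ((s i : ℚ) : ℝ) * ((q':ℝ) * D) := by
      have := hw i
      have : ((w i : ℚ) : ℝ) = ((s i * (q' * D) : ℚ) : ℝ) := by rw [this]
      push_cast at this
      push_cast
      linarith
    rw [hwR]
    have hqDR : ((q':ℝ) * D) ≠ 0 := by
      have h1 : (0:ℝ) < (q':ℝ) := by exact_mod_cast hq'
      have h2 : (0:ℝ) < (D:ℝ) := by exact_mod_cast hDpos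
      positivity
    field_simp

/-! ### from a convergent sequence of rational solutions to one good solution -/

lemma approx_of_seq (k c d : ℕ) (b : ℕ → ℕ → ℝ) (t : ℕ × ℕ → ℝ)
    (htpos : ∀ i ∈ box k c d, b i.1 i.2 ≠ 0 → 0 < t i)
    (htzero : ∀ i, b i.1 i.2 = 0 → t i = 0)
    (htsum : ∑ i ∈ box k c d, t i < 1)
    (ξQ θQ : ℚ) (sQ : ℕ → ℕ × ℕ → ℚ)
    (hzero : ∀ m i, sQ m i ≠ 0 → i ∈ box k c d ∧ b i.1 i.2 ≠ 0)
    (hconv : ∀ i ∈ box k c d, Filter.Tendsto (fun m => ((sQ m i : ℚ) : ℝ)) Filter.atTop (𝓝 (t i)))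
    (hc4 : ∀ m, ∑ i ∈ box k c d, sQ m i * i.1 = ξQ)
    (hc5 : ∀ m, ∑ i ∈ box k c d, sQ m i * i.2 = θQ)
    (ε : ℝ) (hε : 0 < ε) :
    ∃ s : ℕ × ℕ → ℚ, (∀ i, 0 ≤ s i) ∧ (∀ i, s i ≠ 0 → i ∈ box k c d ∧ b i.1 i.2 ≠ 0) ∧
      (∑ i ∈ box k c d, s i < 1) ∧ (∑ i ∈ box k c d, s i * i.1 = ξQ) ∧
      (∑ i ∈ box k c d, s i * i.2 = θQ) ∧
      (ent b k c d t - ε < ent b k c d (fun i => ((s i : ℚ) : ℝ))) := by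
  classical
  have hsumconv : Filter.Tendsto (fun m => ∑ i ∈ box k c d, ((sQ m i : ℚ) : ℝ)) Filter.atTop
      (𝓝 (∑ i ∈ box k c d, t i)) := tendsto_finset_sum _ hconv
  have hUconv : Filter.Tendsto (fun m => 1 - ∑ i ∈ box k c d, ((sQ m i : ℚ) : ℝ)) Filter.atTop
      (𝓝 (1 - ∑ i ∈ box k c d, t i)) := tendsto_const_nhds.sub hsumconv
  have hUne : (1 : ℝ) - ∑ i ∈ box k c d, t i ≠ 0 := by linarith
  have hT1 : Filter.Tendsto (fun m => (1 - ∑ i ∈ box k c d, ((sQ m i : ℚ) : ℝ)) *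
      Real.log (1 - ∑ i ∈ box k c d, ((sQ m i : ℚ) : ℝ))) Filter.atTop
      (𝓝 ((1 - ∑ i ∈ box k c d, t i) * Real.log (1 - ∑ i ∈ box k c d, t i))) :=
    hUconv.mul (hUconv.log hUne)
  have hT2 : Filter.Tendsto (fun m => ∑ i ∈ box k c d,
      ((sQ m i : ℚ) : ℝ) * Real.log ((sQ m i : ℚ) : ℝ)) Filter.atTop
      (𝓝 (∑ i ∈ box k c d, t i * Real.log (t i))) := by
    refine tendsto_finset_sum _ fun i hi => ?_
    by_cases hb : b i.1 i.2 = 0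
    · have hz : ∀ m, sQ m i = 0 := by
        intro m
        by_contra h
        exact (hzero m i h).2 hb
      have ht0 : t i = 0 := htzero i hb
      have : (fun m => ((sQ m i : ℚ) : ℝ) * Real.log ((sQ m i : ℚ) : ℝ)) = fun _ => 0 := by
        funext m
        rw [hz m]
        simp
      rw [this, ht0]
      simp only [Real.log_zero, zero_mul]
      exact tendsto_const_nhds
    · exact (hconv i hi).mul ((hconv i hi).log (ne_of_gt (htpos i hi hb)))
  have hT3 : Filter.Tendsto (fun m => ∑ i ∈ box k c d,
      ((sQ m i : ℚ) : ℝ) * Real.log (b i.1 i.2)) Filter.atTop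
      (𝓝 (∑ i ∈ box k c d, t i * Real.log (b i.1 i.2))) := by
    refine tendsto_finset_sum _ fun i hi => ?_
    exact (hconv i hi).mul_const _
  have htent : Filter.Tendsto (fun m => ent b k c d (fun i => ((sQ m i : ℚ) : ℝ))) Filter.atTop
      (𝓝 (ent b k c d t)) := by
    simp only [ent]
    exact ((hT1.neg).sub hT2).add hT3
  have evA : ∀ᶠ m in Filter.atTop, ent b k c d t - ε < ent b k c d (fun i => ((sQ m i : ℚ) : ℝ)) :=
    htent.eventually (eventually_gt_nhds (by linarith))
  have evB : ∀ᶠ m in Filter.atTop, ∑ i ∈ box k c d, ((sQ m i : ℚ) : ℝ) < 1 :=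
    hsumconv.eventually (eventually_lt_nhds htsum)
  have evC : ∀ᶠ m in Filter.atTop, ∀ i ∈ box k c d, b i.1 i.2 ≠ 0 → 0 < sQ m i := by
    rw [eventually_all_finset]
    intro i hi
    by_cases hb : b i.1 i.2 = 0
    · exact Filter.Eventually.of_forall fun m h => absurd hb h
    · have := (hconv i hi).eventually (eventually_gt_nhds (htpos i hi hb))
      filter_upwards [this] with m hm _
      exact_mod_cast Rat.cast_pos.1 hm
  obtain ⟨m, hA, hB, hC⟩ := (evA.and (evB.and evC)).exists
  refine ⟨sQ m, ?_, hzero m, ?_, hc4 m, hc5 m, hA⟩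
  · intro i
    by_cases h : sQ m i = 0
    · rw [h]
    · exact le_of_lt (hC i (hzero m i h).1 (hzero m i h).2)
  · have : ((∑ i ∈ box k c d, sQ m i : ℚ) : ℝ) < 1 := by
      rw [Rat.cast_sum]
      exact hB
    exact_mod_cast this


/-! ### construction of rational approximating sequences -/

lemma exists_rat_seq (k c d : ℕ) (b : ℕ → ℕ → ℝ) (hbnn : ∀ u v, 0 ≤ b u v)
    (hbne : ∃ u ∈ Finset.Icc 1 k, ∃ v ∈ Finset.Icc c d, b u v ≠ 0)
    (x₀ y₀ E : ℝ) (hx₀ : 0 < x₀) (hy₀ : 0 < y₀) (hE1 : 1 < E)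
    (ξ θ : ℝ) (ξQ θQ : ℚ) (hξc : ((ξQ : ℚ) : ℝ) = ξ) (hθc : ((θQ : ℚ) : ℝ) = θ)
    (hsu : ∑ i ∈ box k c d, (i.1 : ℝ) * tv b x₀ y₀ E i = ξ)
    (hsv : ∑ i ∈ box k c d, (i.2 : ℝ) * tv b x₀ y₀ E i = θ) :
    ∃ sQ : ℕ → ℕ × ℕ → ℚ,
      (∀ m i, sQ m i ≠ 0 → i ∈ box k c d ∧ b i.1 i.2 ≠ 0) ∧
      (∀ i ∈ box k c d,
        Filter.Tendsto (fun m => ((sQ m i : ℚ) : ℝ)) Filter.atTop (𝓝 (tv b x₀ y₀ E i))) ∧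
      (∀ m, ∑ i ∈ box k c d, sQ m i * i.1 = ξQ) ∧
      (∀ m, ∑ i ∈ box k c d, sQ m i * i.2 = θQ) := by
  classical
  set t : ℕ × ℕ → ℝ := tv b x₀ y₀ E with ht
  have hE0 : (0:ℝ) < E := by linarith
  have htz : ∀ i, b i.1 i.2 = 0 → t i = 0 := by
    intro i h
    simp [ht, tv, h]
  have htpos : ∀ i, b i.1 i.2 ≠ 0 → 0 < t i := by
    intro i h
    have : 0 < b i.1 i.2 := lt_of_le_of_ne (hbnn _ _) (Ne.symm h)
    simp only [ht, tv]
    positivity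
  have hsu' : ∑ i ∈ box k c d, t i * (i.1 : ℝ) = ξ := by
    rw [← hsu]; exact Finset.sum_congr rfl fun i _ => mul_comm _ _
  have hsv' : ∑ i ∈ box k c d, t i * (i.2 : ℝ) = θ := by
    rw [← hsv]; exact Finset.sum_congr rfl fun i _ => mul_comm _ _
  -- rational approximations from below
  have hlt : ∀ (m : ℕ) (i : ℕ × ℕ), t i - 1/((m:ℝ)+1) < t i := by
    intro m i
    have : (0:ℝ) < 1/((m:ℝ)+1) := by positivity
    linarith
  choose rfun hr1 hr2 using fun (m : ℕ) (i : ℕ × ℕ) => exists_rat_btwn (hlt m i)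
  set g : ℕ → ℕ × ℕ → ℚ := fun m i => if b i.1 i.2 = 0 then 0 else rfun m i with hg
  have hgzero : ∀ m i, g m i ≠ 0 → b i.1 i.2 ≠ 0 := by
    intro m i h
    by_contra hb
    exact h (by simp [hg, hb])
  have hgconv : ∀ i, Filter.Tendsto (fun m => ((g m i : ℚ) : ℝ)) Filter.atTop (𝓝 (t i)) := by
    intro i
    by_cases hb : b i.1 i.2 = 0
    · have : (fun m => ((g m i : ℚ) : ℝ)) = fun _ => 0 := by
        funext m; simp [hg, hb]
      rw [this, htz i hb]
      exact tendsto_const_nhds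
    · have hfun : ∀ m, ((g m i : ℚ) : ℝ) = ((rfun m i : ℚ) : ℝ) := by
        intro m; simp [hg, hb]
      have hlow : Filter.Tendsto (fun m : ℕ => t i - 1/((m:ℝ)+1)) Filter.atTop (𝓝 (t i)) := by
        have h2 := ((tendsto_const_nhds : Filter.Tendsto (fun _ : ℕ => t i) Filter.atTop
          (𝓝 (t i)))).sub tendsto_one_div_add_atTop_nhds_zero_nat
        simpa using h2
      refine tendsto_of_tendsto_of_tendsto_of_le_of_le hlow tendsto_const_nhds ?_ ?_
      · exact fun m => by simpa [hfun m] using (hr1 m i).le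
      · exact fun m => by simpa [hfun m] using (hr2 m i).le
  by_cases hpar : ∀ p ∈ box k c d, ∀ q ∈ box k c d,
      b p.1 p.2 ≠ 0 → b q.1 q.2 ≠ 0 → p.1 * q.2 = q.1 * p.2
  · -- Case B : all support vectors parallel; one pivot suffices
    obtain ⟨u₀, hu₀, v₀, hv₀, hb₀⟩ := hbne
    set P : ℕ × ℕ := (u₀, v₀) with hP
    have hPbox : P ∈ box k c d := by
      simp [box, Finset.mem_product, hP, hu₀, hv₀]
    have hbP : b P.1 P.2 ≠ 0 := hb₀
    have hP1 : (0:ℚ) < (P.1 : ℚ) := by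
      have : 1 ≤ P.1 := (Finset.mem_Icc.1 hu₀).1
      exact_mod_cast this
    set A : ℕ → ℚ := fun m => ξQ - ∑ i ∈ (box k c d).erase P, g m i * i.1 with hA
    set sQ : ℕ → ℕ × ℕ → ℚ := fun m i =>
      if i = P then A m / P.1 else if i ∈ box k c d then g m i else 0 with hsQ
    have hzero : ∀ m i, sQ m i ≠ 0 → i ∈ box k c d ∧ b i.1 i.2 ≠ 0 := by
      intro m i h
      simp only [hsQ] at h
      by_cases h1 : i = P
      · subst h1; exact ⟨hPbox, hbP⟩
      · rw [if_neg h1] at h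
        by_cases h2 : i ∈ box k c d
        · rw [if_pos h2] at h
          exact ⟨h2, hgzero m i h⟩
        · rw [if_neg h2] at h
          exact absurd rfl h
    have hc4 : ∀ m, ∑ i ∈ box k c d, sQ m i * (i.1 : ℚ) = ξQ := by
      intro m
      rw [← Finset.sum_erase_add _ _ hPbox]
      have h1 : ∑ i ∈ (box k c d).erase P, sQ m i * (i.1 : ℚ)
          = ∑ i ∈ (box k c d).erase P, g m i * (i.1 : ℚ) := by
        refine Finset.sum_congr rfl fun i hi => ?_
        simp only [hsQ, if_neg (Finset.mem_erase.1 hi).1, if_pos (Finset.mem_erase.1 hi).2]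
      rw [h1]
      have h2 : sQ m P * (P.1 : ℚ) = A m := by
        simp only [hsQ, if_pos rfl]
        field_simp
      rw [h2, hA]
      ring
    have hkey : ∀ m, (∑ i ∈ box k c d, sQ m i * (i.2 : ℚ)) * (P.1 : ℚ)
        = (∑ i ∈ box k c d, sQ m i * (i.1 : ℚ)) * (P.2 : ℚ) := by
      intro m
      rw [Finset.sum_mul, Finset.sum_mul]
      refine Finset.sum_congr rfl fun i hi => ?_
      by_cases h : sQ m i = 0
      · rw [h]; ring
      · have hb : b i.1 i.2 ≠ 0 := (hzero m i h).2
        have hcast : (P.1 : ℚ) * (i.2 : ℚ) = (i.1 : ℚ) * (P.2 : ℚ) := by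
          exact_mod_cast congrArg (Nat.cast : ℕ → ℚ) (hpar P hPbox i hi hbP hb)
        calc sQ m i * (i.2:ℚ) * (P.1:ℚ) = sQ m i * ((P.1:ℚ) * (i.2:ℚ)) := by ring
        _ = sQ m i * ((i.1:ℚ) * (P.2:ℚ)) := by rw [hcast]
        _ = sQ m i * (i.1:ℚ) * (P.2:ℚ) := by ring
    have hkeyt : θ * (P.1 : ℝ) = ξ * (P.2 : ℝ) := by
      rw [← hsu', ← hsv']
      rw [Finset.sum_mul, Finset.sum_mul]
      refine Finset.sum_congr rfl fun i hi => ?_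
      by_cases h : b i.1 i.2 = 0
      · rw [htz i h]; ring
      · have hcast : (P.1 : ℝ) * (i.2 : ℝ) = (i.1 : ℝ) * (P.2 : ℝ) := by
          exact_mod_cast congrArg (Nat.cast : ℕ → ℝ) (hpar P hPbox i hi hbP h)
        calc t i * (i.2:ℝ) * (P.1:ℝ) = t i * ((P.1:ℝ) * (i.2:ℝ)) := by ring
        _ = t i * ((i.1:ℝ) * (P.2:ℝ)) := by rw [hcast]
        _ = t i * (i.1:ℝ) * (P.2:ℝ) := by ring
    have hc5 : ∀ m, ∑ i ∈ box k c d, sQ m i * (i.2 : ℚ) = θQ := by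
      intro m
      have hQkey : θQ * (P.1 : ℚ) = ξQ * (P.2 : ℚ) := by
        apply Rat.cast_injective (α := ℝ)
        push_cast
        rw [hξc, hθc]
        exact_mod_cast hkeyt
      have h := hkey m
      rw [hc4 m] at h
      exact mul_right_cancel₀ (ne_of_gt hP1) (h.trans hQkey.symm)
    refine ⟨sQ, hzero, ?_, hc4, hc5⟩
    have hcastA : ∀ m, ((A m : ℚ) : ℝ)
        = (ξQ : ℝ) - ∑ i ∈ (box k c d).erase P, ((g m i : ℚ) : ℝ) * ((i.1 : ℕ) : ℝ) := by
      intro m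
      rw [hA, Rat.cast_sub, Rat.cast_sum]
      congr 1
      refine Finset.sum_congr rfl fun i _ => ?_
      push_cast
      ring
    have hAconv : Filter.Tendsto (fun m => ((A m : ℚ) : ℝ)) Filter.atTop
        (𝓝 (ξ - ∑ i ∈ (box k c d).erase P, t i * (i.1 : ℝ))) := by
      simp only [hcastA, hξc]
      exact tendsto_const_nhds.sub
        (tendsto_finset_sum _ fun i _ => (hgconv i).mul_const _)
    have hsplit : ξ = t P * (P.1 : ℝ) + ∑ i ∈ (box k c d).erase P, t i * (i.1 : ℝ) := by
      rw [← hsu', ← Finset.sum_erase_add _ _ hPbox]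
      ring
    intro i hi
    by_cases h1 : i = P
    · subst h1
      have hfun : ∀ m, ((sQ m P : ℚ) : ℝ) = ((A m : ℚ) : ℝ) / ((P.1 : ℕ) : ℝ) := by
        intro m
        simp only [hsQ, if_pos rfl]
        push_cast
        ring
      simp only [hfun]
      have hP1R : ((P.1 : ℕ) : ℝ) ≠ 0 := by
        have h' : (0:ℚ) < (P.1 : ℚ) := hP1
        have h'' : (0:ℝ) < (P.1 : ℝ) := by exact_mod_cast h'
        exact ne_of_gt h''
      have hgoal := hAconv.div_const ((P.1 : ℕ) : ℝ)
      convert hgoal using 2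
      rw [eq_div_iff hP1R, hsplit]
      ring
    · have hfun : ∀ m, sQ m i = g m i := by
        intro m
        simp only [hsQ, if_neg h1, if_pos hi]
      simp only [hfun]
      exact hgconv i
  · -- Case A : two independent support vectors
    push_neg at hpar
    obtain ⟨p, hpbox, q, hqbox, hbp, hbq, hdet⟩ := hpar
    have hpq : p ≠ q := by
      rintro rfl
      exact hdet rfl
    set Δ : ℚ := ((p.1 : ℚ) * (q.2 : ℚ)) - ((q.1 : ℚ) * (p.2 : ℚ)) with hΔdef
    have hΔ : Δ ≠ 0 := by
      rw [hΔdef, sub_ne_zero]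
      intro h
      exact hdet (by exact_mod_cast h)
    set E2 : Finset (ℕ × ℕ) := ((box k c d).erase p).erase q with hE2
    have hqmem : q ∈ (box k c d).erase p := Finset.mem_erase.2 ⟨fun h => hpq h.symm, hqbox⟩
    have hsplitQ : ∀ f : ℕ × ℕ → ℚ, ∑ i ∈ box k c d, f i = f p + f q + ∑ i ∈ E2, f i := by
      intro f
      rw [← Finset.sum_erase_add _ _ hpbox, ← Finset.sum_erase_add _ _ hqmem]
      ring
    have hsplitR : ∀ f : ℕ × ℕ → ℝ, ∑ i ∈ box k c d, f i = f p + f q + ∑ i ∈ E2, f i := by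
      intro f
      rw [← Finset.sum_erase_add _ _ hpbox, ← Finset.sum_erase_add _ _ hqmem]
      ring
    have hE2mem : ∀ i ∈ E2, i ≠ p ∧ i ≠ q ∧ i ∈ box k c d := by
      intro i hi
      obtain ⟨hiq, hip, hbox⟩ : i ≠ q ∧ i ≠ p ∧ i ∈ box k c d := by
        have h1 := Finset.mem_erase.1 hi
        have h2 := Finset.mem_erase.1 h1.2
        exact ⟨h1.1, h2.1, h2.2⟩
      exact ⟨hip, hiq, hbox⟩
    set A1 : ℕ → ℚ := fun m => ξQ - ∑ i ∈ E2, g m i * i.1 with hA1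
    set A2 : ℕ → ℚ := fun m => θQ - ∑ i ∈ E2, g m i * i.2 with hA2
    set sQ : ℕ → ℕ × ℕ → ℚ := fun m i =>
      if i = p then ((q.2 : ℚ) * A1 m - (q.1 : ℚ) * A2 m) / Δ
      else if i = q then ((p.1 : ℚ) * A2 m - (p.2 : ℚ) * A1 m) / Δ
      else if i ∈ box k c d then g m i else 0 with hsQ
    have hzero : ∀ m i, sQ m i ≠ 0 → i ∈ box k c d ∧ b i.1 i.2 ≠ 0 := by
      intro m i h
      simp only [hsQ] at h
      by_cases h1 : i = p
      · subst h1; exact ⟨hpbox, hbp⟩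
      · rw [if_neg h1] at h
        by_cases h2 : i = q
        · subst h2; exact ⟨hqbox, hbq⟩
        · rw [if_neg h2] at h
          by_cases h3 : i ∈ box k c d
          · rw [if_pos h3] at h
            exact ⟨h3, hgzero m i h⟩
          · rw [if_neg h3] at h
            exact absurd rfl h
    have hvalE2 : ∀ m, ∀ i ∈ E2, sQ m i = g m i := by
      intro m i hi
      obtain ⟨hip, hiq, hbox⟩ := hE2mem i hi
      simp only [hsQ, if_neg hip, if_neg hiq, if_pos hbox]
    have hc4 : ∀ m, ∑ i ∈ box k c d, sQ m i * (i.1 : ℚ) = ξQ := by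
      intro m
      rw [hsplitQ]
      have h1 : ∑ i ∈ E2, sQ m i * (i.1:ℚ) = ∑ i ∈ E2, g m i * (i.1:ℚ) :=
        Finset.sum_congr rfl fun i hi => by rw [hvalE2 m i hi]
      have h2 : ∑ i ∈ E2, g m i * (i.1:ℚ) = ξQ - A1 m := by rw [hA1]; ring
      rw [h1, h2]
      simp only [hsQ, if_pos rfl, if_neg hpq.symm, if_neg hpq, if_true]
      field_simp
      rw [hΔdef]
      ring
    have hc5 : ∀ m, ∑ i ∈ box k c d, sQ m i * (i.2 : ℚ) = θQ := by
      intro m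
      rw [hsplitQ]
      have h1 : ∑ i ∈ E2, sQ m i * (i.2:ℚ) = ∑ i ∈ E2, g m i * (i.2:ℚ) :=
        Finset.sum_congr rfl fun i hi => by rw [hvalE2 m i hi]
      have h2 : ∑ i ∈ E2, g m i * (i.2:ℚ) = θQ - A2 m := by rw [hA2]; ring
      rw [h1, h2]
      simp only [hsQ, if_pos rfl, if_neg hpq.symm, if_neg hpq, if_true]
      field_simp
      rw [hΔdef]
      ring
    refine ⟨sQ, hzero, ?_, hc4, hc5⟩
    -- convergence
    have hcastA1 : ∀ m, ((A1 m : ℚ) : ℝ)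
        = (ξQ : ℝ) - ∑ i ∈ E2, ((g m i : ℚ) : ℝ) * ((i.1 : ℕ) : ℝ) := by
      intro m
      rw [hA1, Rat.cast_sub, Rat.cast_sum]
      congr 1
      exact Finset.sum_congr rfl fun i _ => by push_cast; ring
    have hcastA2 : ∀ m, ((A2 m : ℚ) : ℝ)
        = (θQ : ℝ) - ∑ i ∈ E2, ((g m i : ℚ) : ℝ) * ((i.2 : ℕ) : ℝ) := by
      intro m
      rw [hA2, Rat.cast_sub, Rat.cast_sum]
      congr 1
      exact Finset.sum_congr rfl fun i _ => by push_cast; ring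
    set α : ℝ := ξ - ∑ i ∈ E2, t i * (i.1 : ℝ) with hα
    set β : ℝ := θ - ∑ i ∈ E2, t i * (i.2 : ℝ) with hβ
    have hA1conv : Filter.Tendsto (fun m => ((A1 m : ℚ) : ℝ)) Filter.atTop (𝓝 α) := by
      simp only [hcastA1, hξc, hα]
      exact tendsto_const_nhds.sub (tendsto_finset_sum _ fun i _ => (hgconv i).mul_const _)
    have hA2conv : Filter.Tendsto (fun m => ((A2 m : ℚ) : ℝ)) Filter.atTop (𝓝 β) := by
      simp only [hcastA2, hθc, hβ]
      exact tendsto_const_nhds.sub (tendsto_finset_sum _ fun i _ => (hgconv i).mul_const _)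
    have hαid : α = t p * (p.1 : ℝ) + t q * (q.1 : ℝ) := by
      rw [hα, ← hsu', hsplitR (fun i => t i * (i.1 : ℝ))]
      ring
    have hβid : β = t p * (p.2 : ℝ) + t q * (q.2 : ℝ) := by
      rw [hβ, ← hsv', hsplitR (fun i => t i * (i.2 : ℝ))]
      ring
    have hΔR : ((Δ : ℚ) : ℝ) ≠ 0 := by
      exact_mod_cast hΔ
    intro i hi
    by_cases h1 : i = p
    · subst h1
      have hfun : ∀ m, ((sQ m i : ℚ) : ℝ)
          = (((q.2:ℚ) : ℝ) * ((A1 m : ℚ):ℝ) - ((q.1:ℚ):ℝ) * ((A2 m : ℚ):ℝ)) / ((Δ : ℚ):ℝ) := by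
        intro m
        simp only [hsQ, if_pos rfl]
        push_cast
        ring
      simp only [hfun]
      have hgoal := ((hA1conv.const_mul (((q.2:ℚ) : ℝ))).sub
        (hA2conv.const_mul (((q.1:ℚ):ℝ)))).div_const ((Δ : ℚ):ℝ)
      convert hgoal using 2
      rw [eq_div_iff hΔR, hαid, hβid, hΔdef]
      push_cast
      ring
    · by_cases h2 : i = q
      · subst h2
        have hfun : ∀ m, ((sQ m i : ℚ) : ℝ)
            = (((p.1:ℚ) : ℝ) * ((A2 m : ℚ):ℝ) - ((p.2:ℚ):ℝ) * ((A1 m : ℚ):ℝ)) / ((Δ : ℚ):ℝ) := by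
          intro m
          simp only [hsQ, if_neg h1, if_pos rfl]
          push_cast
          ring
        simp only [hfun]
        have hgoal := ((hA2conv.const_mul (((p.1:ℚ) : ℝ))).sub
          (hA1conv.const_mul (((p.2:ℚ):ℝ)))).div_const ((Δ : ℚ):ℝ)
        convert hgoal using 2
        rw [eq_div_iff hΔR, hαid, hβid, hΔdef]
        push_cast
        ring
      · have hfun : ∀ m, sQ m i = g m i := by
          intro m
          simp only [hsQ, if_neg h1, if_neg h2, if_pos hi]
        simp only [hfun]
        exact hgconv i


end S13

set_option maxHeartbeats 1000000 in
open S13 in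
/-- two-dimensional Hayman-type coefficient asymptotics.  With
`ξ = p₁/q′`, `θ = p₂/q′`, suppose `x₀, y₀ > 0` satisfy
`x₀ ∂B/∂x(x₀,y₀)/B(x₀,y₀) = ξ` and `y₀ ∂B/∂y(x₀,y₀)/B(x₀,y₀) = θ`.  Then, along those `m`
for which the coefficient of `x^{p₁m} y^{p₂m}` in `B(x,y)^{q′m}` is nonzero,
`(1/(q′m)) log Coeff[B^{q′m}, x^{p₁m} y^{p₂m}] → log B(x₀,y₀) − ξ log x₀ − θ log y₀`. -/
theorem stmt_13 (k c d : ℕ) (hk : 1 ≤ k) (hc : 1 ≤ c) (hcd : c ≤ d)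
    (b : ℕ → ℕ → ℝ) (hbnn : ∀ u v, 0 ≤ b u v)
    (hbne : ∃ u ∈ Finset.Icc 1 k, ∃ v ∈ Finset.Icc c d, b u v ≠ 0)
    (p₁ p₂ q' : ℕ) (hp₁ : 0 < p₁) (hp₂ : 0 < p₂) (hq' : 0 < q')
    (ξ θ : ℝ) (hξ : ξ = (p₁ : ℝ) / q') (hθ : θ = (p₂ : ℝ) / q')
    (x₀ y₀ : ℝ) (hx₀ : 0 < x₀) (hy₀ : 0 < y₀)
    (hsx : x₀ * MvPolynomial.eval ![x₀, y₀] (MvPolynomial.pderiv (0 : Fin 2) (Bmv k c d b))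
        / MvPolynomial.eval ![x₀, y₀] (Bmv k c d b) = ξ)
    (hsy : y₀ * MvPolynomial.eval ![x₀, y₀] (MvPolynomial.pderiv (1 : Fin 2) (Bmv k c d b))
        / MvPolynomial.eval ![x₀, y₀] (Bmv k c d b) = θ) :
    Filter.Tendsto
      (fun m : ℕ => (1 / ((q' : ℝ) * m)) *
        Real.log (MvPolynomial.coeff
          (Finsupp.single (0 : Fin 2) (p₁ * m) + Finsupp.single (1 : Fin 2) (p₂ * m))
          (Bmv k c d b ^ (q' * m))))
      (Filter.atTop ⊓ Filter.principal
        {m : ℕ | MvPolynomial.coeff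
          (Finsupp.single (0 : Fin 2) (p₁ * m) + Finsupp.single (1 : Fin 2) (p₂ * m))
          (Bmv k c d b ^ (q' * m)) ≠ 0})
      (𝓝 (Real.log (MvPolynomial.eval ![x₀, y₀] (Bmv k c d b))
            - ξ * Real.log x₀ - θ * Real.log y₀)) := by
  classical
  have hμt : ∀ a₁ a₂ : ℕ, Finsupp.single (0 : Fin 2) a₁ + Finsupp.single (1 : Fin 2) a₂
      = μt a₁ a₂ := fun _ _ => rfl
  simp only [hμt]
  set P : MvPolynomial (Fin 2) ℝ := Bmv k c d b with hPdef
  set E : ℝ := MvPolynomial.eval ![x₀, y₀] P with hEdef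
  have hE1 : 1 < E := one_lt_E k c d b x₀ y₀ hbnn hbne hx₀ hy₀
  have hE0 : (0:ℝ) < E := by linarith
  set L : ℝ := Real.log E - ξ * Real.log x₀ - θ * Real.log y₀ with hLdef
  set A : ℕ → ℝ := fun m => MvPolynomial.coeff (μt (p₁ * m) (p₂ * m)) (P ^ (q' * m)) with hAdef
  have hcoeffnn : ∀ μ, 0 ≤ MvPolynomial.coeff μ P := coeff_Bmv_nonneg k c d b hbnn
  have hAnn : ∀ m, 0 ≤ A m := fun m => coeff_pow_nonneg P hcoeffnn _ _
  -- the evaluation point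
  set z : Fin 2 → ℝ := ![x₀, y₀] with hzdef
  have hz : ∀ i, 0 < z i := by
    intro i
    fin_cases i <;> simp [hzdef, hx₀, hy₀]
  have hz0 : z 0 = x₀ := rfl
  have hz1 : z 1 = y₀ := rfl
  -- ################ upper bound ################
  have hupper : ∀ m : ℕ, 1 ≤ m → A m ≠ 0 →
      (1 / ((q' : ℝ) * m)) * Real.log (A m) ≤ L := by
    intro m hm hAne
    have hApos : 0 < A m := lt_of_le_of_ne (hAnn m) (Ne.symm hAne)
    have hkey := coeff_le_eval P hcoeffnn z hz (q' * m) (μt (p₁ * m) (p₂ * m))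
    have hprod : ∏ i, z i ^ (μt (p₁ * m) (p₂ * m)) i = x₀ ^ (p₁ * m) * y₀ ^ (p₂ * m) := by
      rw [Fin.prod_univ_two, μt_apply0, μt_apply1, hz0, hz1]
    rw [hprod] at hkey
    have hXpos : (0:ℝ) < x₀ ^ (p₁ * m) * y₀ ^ (p₂ * m) := by positivity
    have hEn : MvPolynomial.eval z P = E := rfl
    rw [hEn] at hkey
    have hqm : (0:ℝ) < (q' : ℝ) * m := by
      have h1 : (0:ℝ) < (q':ℝ) := by exact_mod_cast hq'
      have h2 : (0:ℝ) < (m:ℝ) := by exact_mod_cast hm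
      positivity
    have hlog : Real.log (A m) + ((p₁ * m : ℕ) : ℝ) * Real.log x₀
        + ((p₂ * m : ℕ) : ℝ) * Real.log y₀ ≤ ((q' * m : ℕ) : ℝ) * Real.log E := by
      have h := Real.log_le_log (mul_pos hApos hXpos) hkey
      rw [Real.log_mul (ne_of_gt hApos) (ne_of_gt hXpos), Real.log_pow,
        Real.log_mul (by positivity) (by positivity), Real.log_pow, Real.log_pow] at h
      linarith
    have hq'0 : (q':ℝ) ≠ 0 := by
      have : (0:ℝ) < (q':ℝ) := by exact_mod_cast hq'
      exact ne_of_gt this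
    have hξm : ((p₁ * m : ℕ) : ℝ) = ξ * ((q':ℝ) * m) := by
      push_cast
      rw [hξ]
      field_simp
    have hθm : ((p₂ * m : ℕ) : ℝ) = θ * ((q':ℝ) * m) := by
      push_cast
      rw [hθ]
      field_simp
    have hcast : ((q' * m : ℕ) : ℝ) = (q':ℝ) * m := by push_cast; ring
    rw [hξm, hθm, hcast] at hlog
    rw [one_div, inv_mul_le_iff₀ hqm]
    have hLm : ((q':ℝ) * m) * L = ((q':ℝ) * m) * Real.log E
        - ξ * ((q':ℝ) * m) * Real.log x₀ - θ * ((q':ℝ) * m) * Real.log y₀ := by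
      rw [hLdef]; ring
    rw [hLm]
    linarith
  -- ################ lower bound ################
  have hlower : ∀ ε : ℝ, 0 < ε → ∀ᶠ m : ℕ in Filter.atTop, A m ≠ 0 →
      L - ε < (1 / ((q' : ℝ) * m)) * Real.log (A m) := by
    intro ε hε
    set δ : ℝ := ε / 2 with hδdef
    have hδ : 0 < δ := by positivity
    -- saddle identities
    have hsum := sum_tv_eq k c d b x₀ y₀ E hEdef hE1
    have hsu := sum_u_tv k c d b x₀ y₀ E hEdef hE1 ξ hsx
    have hsv := sum_v_tv k c d b x₀ y₀ E hEdef hE1 hc θ hsy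
    have hentL : ent b k c d (tv b x₀ y₀ E) = L :=
      ent_tv k c d b x₀ y₀ E hEdef hE1 hbnn hx₀ hy₀ hc ξ θ hsx hsy
    set ξQ : ℚ := (p₁ : ℚ) / (q' : ℚ) with hξQ
    set θQ : ℚ := (p₂ : ℚ) / (q' : ℚ) with hθQ
    have hξc : ((ξQ : ℚ) : ℝ) = ξ := by rw [hξQ, hξ]; push_cast; ring
    have hθc : ((θQ : ℚ) : ℝ) = θ := by rw [hθQ, hθ]; push_cast; ring
    obtain ⟨sQ, hzeroQ, hconvQ, hc4Q, hc5Q⟩ :=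
      exists_rat_seq k c d b hbnn hbne x₀ y₀ E hx₀ hy₀ hE1 ξ θ ξQ θQ hξc hθc hsu hsv
    have htpos : ∀ i ∈ box k c d, b i.1 i.2 ≠ 0 → 0 < tv b x₀ y₀ E i := by
      intro i _ h
      have : 0 < b i.1 i.2 := lt_of_le_of_ne (hbnn _ _) (Ne.symm h)
      simp only [tv]
      positivity
    have htzero : ∀ i, b i.1 i.2 = 0 → tv b x₀ y₀ E i = 0 := by
      intro i h
      simp [tv, h]
    have htsum : ∑ i ∈ box k c d, tv b x₀ y₀ E i < 1 := by
      rw [hsum]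
      have : 0 < 1 / E := by positivity
      linarith
    obtain ⟨s, hs1, hs2, hs3, hs4, hs5, hs6⟩ :=
      approx_of_seq k c d b (tv b x₀ y₀ E) htpos htzero htsum ξQ θQ sQ hzeroQ hconvQ
        hc4Q hc5Q δ hδ
    rw [hentL] at hs6
    obtain ⟨M, hM, w, hw1, hw2, hw3, hw4, hw5, hw6⟩ :=
      rat_to_counts k c d q' p₁ p₂ hq' b s hs1 hs2 hs3 hs4 hs5
    set F : ℝ := ent b k c d (fun i => (w i : ℝ) / ((q':ℝ) * M)) with hFdef
    have hFs : F = ent b k c d (fun i => ((s i : ℚ) : ℝ)) := by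
      rw [hFdef]
      exact congrArg _ (funext hw6)
    have hF : L - δ < F := by rw [hFs]; exact hs6
    set Cb : ℝ := ((box k c d).card : ℝ) + 1 with hCb
    have hCbpos : 0 < Cb := by
      rw [hCb]; positivity
    -- the level bound, rewritten to the canonical target
    have hlevel : ∀ j : ℕ, 1 ≤ j → A (M * j) ≠ 0 ∧
        ((q' * (M * j) : ℕ) : ℝ) * F - Cb * (Cst + Real.log ((q' * (M * j) : ℕ) : ℝ))
          ≤ Real.log (A (M * j)) := by
      intro j hj
      obtain ⟨hpos, hbound⟩ := level_lower_bound k c d b hbnn M q' hM hq' w hw1 hw2 hw3 j hj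
      have e1 : ∑ i ∈ box k c d, (j * w i) * i.1 = p₁ * (M * j) := by
        have h : ∑ i ∈ box k c d, (j * w i) * i.1 = j * ∑ i ∈ box k c d, w i * i.1 := by
          rw [Finset.mul_sum]
          exact Finset.sum_congr rfl fun i _ => by ring
        rw [h, hw4]
        ring
      have e2 : ∑ i ∈ box k c d, (j * w i) * i.2 = p₂ * (M * j) := by
        have h : ∑ i ∈ box k c d, (j * w i) * i.2 = j * ∑ i ∈ box k c d, w i * i.2 := by
          rw [Finset.mul_sum]
          exact Finset.sum_congr rfl fun i _ => by ring
        rw [h, hw5]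
        ring
      rw [e1, e2] at hpos hbound
      exact ⟨ne_of_gt hpos, hbound⟩
    -- residue data
    set res : ℕ → ℕ := fun ρ => sInf {r : ℕ | A r ≠ 0 ∧ r % M = ρ} with hres
    set Rstar : ℕ := ∑ ρ ∈ Finset.range M, res ρ with hRstar
    set cR : ℝ := ∑ ρ ∈ Finset.range M, |Real.log (A (res ρ))| with hcR
    set D : ℝ := (q':ℝ) * Rstar * |F| + Cb * Cst + cR with hD
    -- the tail tends to zero
    have htail : Filter.Tendsto
        (fun m : ℕ => (D + Cb * Real.log ((q':ℝ) * m)) / ((q':ℝ) * m))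
        Filter.atTop (𝓝 0) := by
      have hq'R : (0:ℝ) < (q':ℝ) := by exact_mod_cast hq'
      have hbase : Filter.Tendsto (fun m : ℕ => (q':ℝ) * m) Filter.atTop Filter.atTop := by
        exact Filter.Tendsto.const_mul_atTop hq'R tendsto_natCast_atTop_atTop
      have houter : Filter.Tendsto (fun x : ℝ => (D + Cb * Real.log x) / x)
          Filter.atTop (𝓝 0) := by
        have h1 : Filter.Tendsto (fun x : ℝ => D / x) Filter.atTop (𝓝 0) :=
          tendsto_const_nhds.div_atTop Filter.tendsto_id
        have h2 : Filter.Tendsto (fun x : ℝ => Real.log x / x) Filter.atTop (𝓝 0) :=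
          Real.isLittleO_log_id_atTop.tendsto_div_nhds_zero
        have h3 := h1.add ((h2.const_mul Cb))
        have : (fun x : ℝ => (D + Cb * Real.log x) / x)
            = fun x : ℝ => D / x + Cb * (Real.log x / x) := by
          funext x
          rw [add_div]
          ring
        rw [this]
        simpa using h3
      exact houter.comp hbase
    have hδev : ∀ᶠ m : ℕ in Filter.atTop,
        (D + Cb * Real.log ((q':ℝ) * m)) / ((q':ℝ) * m) < δ :=
      htail.eventually (eventually_lt_nhds hδ)
    filter_upwards [Filter.eventually_ge_atTop 1, Filter.eventually_gt_atTop Rstar, hδev]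
      with m hm1 hmR htailm hAne
    -- decompose m = r + M * j
    have hq'R : (0:ℝ) < (q':ℝ) := by exact_mod_cast hq'
    have hmem : m ∈ {r : ℕ | A r ≠ 0 ∧ r % M = m % M} := ⟨hAne, rfl⟩
    set r : ℕ := res (m % M) with hrdef
    have hrmem : A r ≠ 0 ∧ r % M = m % M := Nat.sInf_mem ⟨m, hmem⟩
    have hrle : r ≤ m := Nat.sInf_le hmem
    have hrR : r ≤ Rstar := by
      rw [hRstar]
      exact Finset.single_le_sum (f := fun ρ => res ρ) (fun ρ _ => Nat.zero_le _)
        (Finset.mem_range.2 (Nat.mod_lt m hM))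
    have hdvd : M ∣ (m - r) := (Nat.modEq_iff_dvd' hrle).mp hrmem.2
    set j : ℕ := (m - r) / M with hjdef
    have hmrj : M * j = m - r := Nat.mul_div_cancel' hdvd
    have hj1 : 1 ≤ j := by
      rcases Nat.eq_zero_or_pos j with h | h
      · exfalso
        rw [h, mul_zero] at hmrj
        omega
      · exact h
    have hmeq : m = r + M * j := by omega
    obtain ⟨hMjne, hMjbound⟩ := hlevel j hj1
    have hMjpos : 0 < A (M * j) := lt_of_le_of_ne (hAnn _) (Ne.symm hMjne)
    have hrpos : 0 < A r := lt_of_le_of_ne (hAnn _) (Ne.symm hrmem.1)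
    -- superadditivity
    have hsuper : A r * A (M * j) ≤ A m := by
      have h := coeff_pow_superadd P hcoeffnn (μt (p₁ * r) (p₂ * r))
        (μt (p₁ * (M * j)) (p₂ * (M * j))) (q' * r) (q' * (M * j))
      have hμ : μt (p₁ * r) (p₂ * r) + μt (p₁ * (M * j)) (p₂ * (M * j))
          = μt (p₁ * m) (p₂ * m) := by
        rw [μt_add]
        congr 1 <;> (rw [hmeq]; ring)
      have hn : q' * r + q' * (M * j) = q' * m := by rw [hmeq]; ring
      rw [hμ, hn] at h
      exact h
    have hApos : 0 < A m := lt_of_lt_of_le (by positivity) hsuper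
    have hlogsup : Real.log (A r) + Real.log (A (M * j)) ≤ Real.log (A m) := by
      rw [← Real.log_mul (ne_of_gt hrpos) (ne_of_gt hMjpos)]
      exact Real.log_le_log (by positivity) hsuper
    -- bound log A r from below
    have hlogr : -cR ≤ Real.log (A r) := by
      have : |Real.log (A r)| ≤ cR := by
        rw [hcR, hrdef]
        exact Finset.single_le_sum (f := fun ρ => |Real.log (A (res ρ))|)
          (fun ρ _ => abs_nonneg _) (Finset.mem_range.2 (Nat.mod_lt m hM))
      have h := neg_abs_le (Real.log (A r))
      linarith
    -- arithmetic
    have hnj : ((q' * (M * j) : ℕ) : ℝ) = (q':ℝ) * m - (q':ℝ) * r := by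
      rw [hmeq]
      push_cast
      ring
    have hnjpos : (0:ℝ) < ((q' * (M * j) : ℕ) : ℝ) := by
      have : 1 ≤ q' * (M * j) := Nat.mul_pos hq' (Nat.mul_pos hM hj1)
      exact_mod_cast this
    have hnj1 : (1:ℝ) ≤ ((q' * (M * j) : ℕ) : ℝ) := by
      have : 1 ≤ q' * (M * j) := Nat.mul_pos hq' (Nat.mul_pos hM hj1)
      exact_mod_cast this
    have hnpos : (0:ℝ) < (q':ℝ) * m := by
      have h2 : (0:ℝ) < (m:ℝ) := by exact_mod_cast hm1
      positivity
    have hrcast : (0:ℝ) ≤ (q':ℝ) * r := by positivity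
    have hrRc : (q':ℝ) * r ≤ (q':ℝ) * Rstar := by
      have h : (r:ℝ) ≤ (Rstar:ℝ) := by exact_mod_cast hrR
      exact mul_le_mul_of_nonneg_left h hq'R.le
    have hnjlen : ((q' * (M * j) : ℕ) : ℝ) ≤ (q':ℝ) * m := by
      rw [hnj]; linarith
    have hlogle : Real.log ((q' * (M * j) : ℕ) : ℝ) ≤ Real.log ((q':ℝ) * m) :=
      Real.log_le_log hnjpos hnjlen
    have hCstnn := Cst_nonneg
    -- combine
    have hmain : (q':ℝ) * m * F - (D + Cb * Real.log ((q':ℝ) * m)) ≤ Real.log (A m) := by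
      have habs : ((q':ℝ) * r) * F ≤ ((q':ℝ) * Rstar) * |F| := by
        calc ((q':ℝ) * r) * F ≤ ((q':ℝ) * r) * |F| :=
              mul_le_mul_of_nonneg_left (le_abs_self F) hrcast
        _ ≤ ((q':ℝ) * Rstar) * |F| := mul_le_mul_of_nonneg_right hrRc (abs_nonneg F)
      have h1 : (q':ℝ) * m * F - (q':ℝ) * Rstar * |F| ≤ ((q' * (M * j) : ℕ) : ℝ) * F := by
        rw [hnj]
        have e : ((q':ℝ) * m - (q':ℝ) * r) * F = (q':ℝ) * m * F - ((q':ℝ) * r) * F := by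
          ring
        rw [e]
        linarith
      have h2 : Cb * (Cst + Real.log ((q' * (M * j) : ℕ) : ℝ))
          ≤ Cb * (Cst + Real.log ((q':ℝ) * m)) :=
        mul_le_mul_of_nonneg_left (by linarith) hCbpos.le
      have e2 : Cb * (Cst + Real.log ((q':ℝ) * m))
          = Cb * Cst + Cb * Real.log ((q':ℝ) * m) := by ring
      rw [hD]
      linarith [hMjbound, hlogsup, hlogr]
    -- divide by q'm
    have hdiv : F - (D + Cb * Real.log ((q':ℝ) * m)) / ((q':ℝ) * m)
        ≤ (1 / ((q':ℝ) * m)) * Real.log (A m) := by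
      have hpos : (0:ℝ) < 1 / ((q':ℝ) * m) := by positivity
      have h := mul_le_mul_of_nonneg_left hmain (le_of_lt hpos)
      have e : (1 / ((q':ℝ) * m)) * ((q':ℝ) * m * F - (D + Cb * Real.log ((q':ℝ) * m)))
          = F - (D + Cb * Real.log ((q':ℝ) * m)) / ((q':ℝ) * m) := by
        field_simp
      rw [e] at h
      exact h
    have hδ2 : δ + δ = ε := by rw [hδdef]; ring
    have hfin : L - ε < F - (D + Cb * Real.log ((q':ℝ) * m)) / ((q':ℝ) * m) := by
      linarith [hF, htailm, hδ2]
    linarith [hdiv, hfin]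
  -- ################ glue ################
  rw [Metric.tendsto_nhds]
  intro ε hε
  rw [Filter.eventually_inf_principal]
  have hev := hlower (ε/2) (by positivity)
  filter_upwards [Filter.eventually_ge_atTop 1, hev] with m hm1 hlow hmS
  have h1 := hupper m hm1 hmS
  have h2 := hlow hmS
  rw [Real.dist_eq, abs_lt]
  constructor <;> [linarith; linarith]
end
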